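/- arXiv:1704.07104 — 2 statements merged into one kernel-verified Lean document; each statement's English description precedes it below -/
import Mathlib

section
/- The number of permutations of length n avoiding 231 and the mesh pattern (21, {⟨0,1⟩,⟨1,0⟩,⟨1,1⟩,⟨1,2⟩,⟨2,1⟩}) equals the (n−1)-st Motzkin number for n ≥ 1 (and equals 1 for n = 0); the generating function P(x) satisfies P(x) = x·P(x)² − x·(P(x) − 1) + 1. -/
def extFun {k n : ℕ} (α : Fin k → Fin n) : ℕ → ℕ := fun i =>
  if h0 : i = 0 then 0
  else if h1 : i ≤ k then ((α ⟨i - 1, by omega⟩ : Fin n) : ℕ) + 1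
  else n + 1

/-- An occurrence of the mesh pattern `(τ, R)` in `π` given by index/value
injections `α`, `β` (using 1-indexed coordinates for the regions). -/
def MeshOcc {k n : ℕ} (τ : Equiv.Perm (Fin k)) (R : Finset (ℕ × ℕ))
    (π : Equiv.Perm (Fin n)) (α β : Fin k → Fin n) : Prop :=
  StrictMono α ∧ StrictMono β ∧ (∀ i, π (α i) = β (τ i)) ∧
    ∀ p ∈ R, ∀ x : Fin n,
      ¬(extFun α p.1 < (x : ℕ) + 1 ∧ (x : ℕ) + 1 < extFun α (p.1 + 1) ∧
        extFun β p.2 < (π x : ℕ) + 1 ∧ (π x : ℕ) + 1 < extFun β (p.2 + 1))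

def ContainsMesh {k n : ℕ} (τ : Equiv.Perm (Fin k)) (R : Finset (ℕ × ℕ))
    (π : Equiv.Perm (Fin n)) : Prop :=
  ∃ α β : Fin k → Fin n, MeshOcc τ R π α β

def AvoidsMesh {k n : ℕ} (τ : Equiv.Perm (Fin k)) (R : Finset (ℕ × ℕ))
    (π : Equiv.Perm (Fin n)) : Prop :=
  ¬ ContainsMesh τ R π

/-- `π` avoids the classical pattern 231. -/
def Avoids231 {n : ℕ} (π : Equiv.Perm (Fin n)) : Prop :=
  ¬ ∃ i j k : Fin n, i < j ∧ j < k ∧ π k < π i ∧ π i < π j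

/-- The Motzkin numbers: `M 0 = 1`,
`M (n+1) = M n + ∑_{i=0}^{n-1} M i * M (n-1-i)`. -/
noncomputable def motzkin : ℕ → ℕ := fun n =>
  Nat.strongRecOn n fun n ih =>
    if h : n = 0 then 1
    else
      ih (n - 1) (by omega) +
        ∑ i : Fin (n - 1),
          ih i (i.isLt.trans_le (by omega)) * ih (n - 2 - i) (by omega)

/-- The number of permutations of length `n` avoiding 231 and the mesh pattern
`(21, {⟨0,1⟩,⟨1,0⟩,⟨1,1⟩,⟨1,2⟩,⟨2,1⟩})`. -/
noncomputable def motzkinCount (n : ℕ) : ℕ :=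
  Nat.card {π : Equiv.Perm (Fin n) // Avoids231 π ∧
    AvoidsMesh (Equiv.swap 0 1 : Equiv.Perm (Fin 2))
      ({(0,1),(1,0),(1,1),(1,2),(2,1)} : Finset (ℕ × ℕ)) π}

def NoAdj {n : ℕ} (π : Equiv.Perm (Fin n)) : Prop :=
  ∀ i j : Fin n, (j : ℕ) = (i : ℕ) + 1 → (π j : ℕ) + 1 ≠ (π i : ℕ)

def Good {n : ℕ} (π : Equiv.Perm (Fin n)) : Prop := Avoids231 π ∧ NoAdj π

lemma motzkin_eq (n : ℕ) : motzkin n =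
    if n = 0 then 1
    else motzkin (n-1) + ∑ i : Fin (n-1), motzkin i * motzkin (n-2-i) := by
  have h : motzkin n = Nat.strongRecOn n (fun n ih =>
      if h : n = 0 then 1
      else ih (n - 1) (by omega) +
        ∑ i : Fin (n - 1), ih i (i.isLt.trans_le (by omega)) * ih (n - 2 - i) (by omega)) := rfl
  rw [h, Nat.strongRecOn_eq]
  split_ifs <;> rfl

lemma motzkin_zero : motzkin 0 = 1 := by rw [motzkin_eq]; simp

lemma motzkin_succ (n : ℕ) :
    motzkin (n+1) = motzkin n + ∑ i : Fin n, motzkin i * motzkin (n-1-i) := by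
  rw [motzkin_eq]; simp

-- mesh characterization
lemma containsMesh_iff {n : ℕ} (π : Equiv.Perm (Fin n)) :
    ContainsMesh (Equiv.swap 0 1 : Equiv.Perm (Fin 2))
      ({(0,1),(1,0),(1,1),(1,2),(2,1)} : Finset (ℕ × ℕ)) π ↔
    ∃ i j : Fin n, (j : ℕ) = (i : ℕ) + 1 ∧ (π j : ℕ) + 1 = (π i : ℕ) := by
  constructor
  · rintro ⟨α, β, hα, hβ, hval, hbox⟩
    have hpq : α 0 < α 1 := hα (by decide)
    have hβ01 : β 0 < β 1 := hβ (by decide)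
    have hv0 : π (α 0) = β 1 := by have := hval 0; rwa [show Equiv.swap (0:Fin 2) 1 0 = 1 by decide] at this
    have hv1 : π (α 1) = β 0 := by have := hval 1; rwa [show Equiv.swap (0:Fin 2) 1 1 = 0 by decide] at this
    have hq : (α 1 : ℕ) = (α 0 : ℕ) + 1 := by
      by_contra hne
      have hx : (α 0 : ℕ) + 1 < n := by have := (α 1).isLt; omega
      set x : Fin n := ⟨(α 0 : ℕ) + 1, hx⟩ with hxdef
      have hx0 : x ≠ α 0 := by intro h; apply_fun (fun t => (t : ℕ)) at h; simp [hxdef] at h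
      have hx1 : x ≠ α 1 := by intro h; apply_fun (fun t => (t : ℕ)) at h; simp [hxdef] at h; omega
      have hπ0 : (π x : ℕ) ≠ (β 0 : ℕ) := by
        intro h; apply hx1; apply π.injective; rw [hv1]; exact Fin.ext h
      have hπ1 : (π x : ℕ) ≠ (β 1 : ℕ) := by
        intro h; apply hx0; apply π.injective; rw [hv0]; exact Fin.ext h
      have h10 := hbox (1,0) (by decide) x
      have h11 := hbox (1,1) (by decide) x
      have h12 := hbox (1,2) (by decide) x
      simp only [extFun, Fin.mk_zero, Fin.mk_one] at h10 h11 h12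
      norm_num at h10 h11 h12
      have := (π x).isLt
      have := hpq
      rw [Fin.lt_def] at this hβ01
      have hxv : ((⟨(α 0 : ℕ) + 1, hx⟩ : Fin n) : ℕ) = (α 0 : ℕ) + 1 := rfl
      omega
    have hvv : (β 1 : ℕ) = (β 0 : ℕ) + 1 := by
      by_contra hne
      have hy : (β 0 : ℕ) + 1 < n := by have := (β 1).isLt; rw [Fin.lt_def] at hβ01; omega
      set y : Fin n := π.symm ⟨(β 0 : ℕ) + 1, hy⟩ with hydef
      have hπy : (π y : ℕ) = (β 0 : ℕ) + 1 := by rw [hydef, Equiv.apply_symm_apply]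
      have hy0 : y ≠ α 0 := by
        intro h; rw [h, hv0] at hπy; rw [Fin.lt_def] at hβ01; omega
      have hy1 : y ≠ α 1 := by intro h; rw [h, hv1] at hπy; omega
      have h01 := hbox (0,1) (by decide) y
      have h11 := hbox (1,1) (by decide) y
      have h21 := hbox (2,1) (by decide) y
      simp only [extFun, Fin.mk_zero, Fin.mk_one] at h01 h11 h21
      norm_num at h01 h11 h21
      have hyne0 : (y : ℕ) ≠ (α 0 : ℕ) := fun h => hy0 (Fin.ext h)
      have hyne1 : (y : ℕ) ≠ (α 1 : ℕ) := fun h => hy1 (Fin.ext h)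
      have := y.isLt
      rw [Fin.lt_def] at hβ01
      omega
    refine ⟨α 0, α 1, hq, ?_⟩
    rw [hv0, hv1, hvv]
  · rintro ⟨i, j, hj, hv⟩
    have hij : (i : ℕ) < (j : ℕ) := by omega
    have hπ : (π j : ℕ) < (π i : ℕ) := by omega
    refine ⟨fun t => if (t : ℕ) = 0 then i else j, fun t => if (t : ℕ) = 0 then π j else π i,
      ?_, ?_, ?_, ?_⟩
    · intro a b hab
      have ha := a.isLt; have hb := b.isLt
      rw [Fin.lt_def] at hab
      have hab' : (a : ℕ) = 0 ∧ (b : ℕ) = 1 := by omega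
      rw [Fin.lt_def]
      simp [hab'.1, hab'.2, hij]
    · intro a b hab
      have ha := a.isLt; have hb := b.isLt
      rw [Fin.lt_def] at hab
      have hab' : (a : ℕ) = 0 ∧ (b : ℕ) = 1 := by omega
      rw [Fin.lt_def]
      simp [hab'.1, hab'.2, hπ]
    · intro t
      have ht := t.isLt
      rcases (by omega : (t : ℕ) = 0 ∨ (t : ℕ) = 1) with ht' | ht'
      · have : t = 0 := Fin.ext ht'
        subst this
        rw [Equiv.swap_apply_left]
        simp
      · have : t = 1 := Fin.ext ht'
        subst this
        rw [Equiv.swap_apply_right]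
        simp
    · intro p hp x
      simp only [Finset.mem_insert, Finset.mem_singleton] at hp
      have hxlt := x.isLt
      have hπx := (π x).isLt
      rcases hp with h | h | h | h | h <;> subst h <;>
        rintro ⟨h1, h2, h3, h4⟩ <;> simp [extFun] at h1 h2 h3 h4 <;> omega

section Glue
variable {k m : ℕ} (A : Equiv.Perm (Fin k)) (B : Equiv.Perm (Fin m))

def Tops {n : ℕ} (π : Equiv.Perm (Fin n)) : Prop :=
  ∃ i : Fin n, (i : ℕ) = 0 ∧ (π i : ℕ) + 1 = n

def glueFun : Fin (k + 1 + m) → Fin (k + 1 + m) := fun i =>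
  if h : (i : ℕ) < k then ⟨(A ⟨i, h⟩ : ℕ), by have := (A ⟨i, h⟩).isLt; omega⟩
  else if h2 : (i : ℕ) = k then ⟨k + m, by omega⟩
  else ⟨k + (B ⟨(i : ℕ) - (k + 1), by have := i.isLt; omega⟩ : ℕ),
    by have := (B ⟨(i : ℕ) - (k + 1), by have := i.isLt; omega⟩).isLt; omega⟩

lemma glueFun_val_lt {i : Fin (k + 1 + m)} (h : (i : ℕ) < k) :
    (glueFun A B i : ℕ) = (A ⟨i, h⟩ : ℕ) := by
  simp only [glueFun]; rw [dif_pos h]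

lemma glueFun_val_eq {i : Fin (k + 1 + m)} (h : (i : ℕ) = k) :
    (glueFun A B i : ℕ) = k + m := by
  simp only [glueFun]; rw [dif_neg (by omega), dif_pos h]

lemma glueFun_val_gt {i : Fin (k + 1 + m)} (h : k < (i : ℕ)) :
    ∃ hj : (i : ℕ) - (k + 1) < m,
      (glueFun A B i : ℕ) = k + (B ⟨(i : ℕ) - (k + 1), hj⟩ : ℕ) := by
  refine ⟨by have := i.isLt; omega, ?_⟩
  simp only [glueFun]; rw [dif_neg (by omega), dif_neg (by omega)]

lemma glueFun_bij : Function.Bijective (glueFun A B) := by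
  constructor
  · intro a b hab
    have h' : (glueFun A B a : ℕ) = (glueFun A B b : ℕ) := congrArg Fin.val hab
    rcases lt_trichotomy ((a : ℕ)) k with ha | ha | ha <;>
      rcases lt_trichotomy ((b : ℕ)) k with hb | hb | hb
    · rw [glueFun_val_lt A B ha, glueFun_val_lt A B hb] at h'
      have := congrArg Fin.val (A.injective (Fin.ext h'))
      exact Fin.ext this
    · rw [glueFun_val_lt A B ha, glueFun_val_eq A B hb] at h'
      have := (A ⟨a, ha⟩).isLt; omega
    · obtain ⟨hj, he⟩ := glueFun_val_gt A B (i := b) hb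
      rw [glueFun_val_lt A B ha, he] at h'
      have := (A ⟨a, ha⟩).isLt; omega
    · rw [glueFun_val_eq A B ha, glueFun_val_lt A B hb] at h'
      have := (A ⟨b, hb⟩).isLt; omega
    · exact Fin.ext (by omega)
    · obtain ⟨hj, he⟩ := glueFun_val_gt A B (i := b) hb
      rw [glueFun_val_eq A B ha, he] at h'
      have := (B ⟨(b : ℕ) - (k + 1), hj⟩).isLt; omega
    · obtain ⟨hj, he⟩ := glueFun_val_gt A B (i := a) ha
      rw [glueFun_val_lt A B hb, he] at h'
      have := (A ⟨b, hb⟩).isLt; omega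
    · obtain ⟨hj, he⟩ := glueFun_val_gt A B (i := a) ha
      rw [glueFun_val_eq A B hb, he] at h'
      have := (B ⟨(a : ℕ) - (k + 1), hj⟩).isLt; omega
    · obtain ⟨hja, hea⟩ := glueFun_val_gt A B (i := a) ha
      obtain ⟨hjb, heb⟩ := glueFun_val_gt A B (i := b) hb
      rw [hea, heb] at h'
      have hBv : (B ⟨(a : ℕ) - (k + 1), hja⟩ : ℕ) = (B ⟨(b : ℕ) - (k + 1), hjb⟩ : ℕ) := by omega
      have := congrArg Fin.val (B.injective (Fin.ext hBv))
      simp only at this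
      exact Fin.ext (by omega)
  · intro v
    by_cases hv : (v : ℕ) < k
    · refine ⟨⟨(A.symm ⟨v, hv⟩ : ℕ), by have := (A.symm ⟨v, hv⟩).isLt; omega⟩, ?_⟩
      apply Fin.ext
      rw [glueFun_val_lt A B (by exact (A.symm ⟨v, hv⟩).isLt)]
      simp
    · by_cases hv2 : (v : ℕ) = k + m
      · refine ⟨⟨k, by omega⟩, ?_⟩
        apply Fin.ext
        rw [glueFun_val_eq A B rfl, hv2]
      · have hvk : (v : ℕ) - k < m := by have := v.isLt; omega
        set s : Fin m := B.symm ⟨(v : ℕ) - k, hvk⟩ with hs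
        refine ⟨⟨k + 1 + (s : ℕ), by have := s.isLt; omega⟩, ?_⟩
        apply Fin.ext
        obtain ⟨hj, he⟩ := glueFun_val_gt A B
          (i := ⟨k + 1 + (s : ℕ), by have := s.isLt; omega⟩) (by show k < k + 1 + (s : ℕ); omega)
        rw [he]
        have harg : (⟨((⟨k + 1 + (s : ℕ), by have := s.isLt; omega⟩ : Fin (k+1+m)) : ℕ) - (k + 1), hj⟩ : Fin m) = s := by
          apply Fin.ext
          show k + 1 + (s : ℕ) - (k + 1) = (s : ℕ)
          omega
        rw [harg, hs, Equiv.apply_symm_apply]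
        show k + ((v : ℕ) - k) = (v : ℕ)
        omega

noncomputable def glue : Equiv.Perm (Fin (k + 1 + m)) := Equiv.ofBijective _ (glueFun_bij A B)

lemma glue_val_lt {i : Fin (k + 1 + m)} (h : (i : ℕ) < k) :
    (glue A B i : ℕ) = (A ⟨i, h⟩ : ℕ) := glueFun_val_lt A B h

lemma glue_val_eq {i : Fin (k + 1 + m)} (h : (i : ℕ) = k) :
    (glue A B i : ℕ) = k + m := glueFun_val_eq A B h

lemma glue_val_gt {i : Fin (k + 1 + m)} (h : k < (i : ℕ)) :
    ∃ hj : (i : ℕ) - (k + 1) < m,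
      (glue A B i : ℕ) = k + (B ⟨(i : ℕ) - (k + 1), hj⟩ : ℕ) := glueFun_val_gt A B h

end Glue

section GlueGood
variable {k m : ℕ} (A : Equiv.Perm (Fin k)) (B : Equiv.Perm (Fin m))

lemma glue_val_le (x : Fin (k + 1 + m)) : (glue A B x : ℕ) ≤ k + m := by
  rcases lt_trichotomy ((x : ℕ)) k with h | h | h
  · rw [glue_val_lt A B h]; have := (A ⟨x, h⟩).isLt; omega
  · rw [glue_val_eq A B h]
  · obtain ⟨hj, he⟩ := glue_val_gt A B h
    rw [he]; have := (B ⟨(x : ℕ) - (k + 1), hj⟩).isLt; omega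

lemma glue_good (hA : Good A) (hB : Good B) (hTB : ¬ Tops B) : Good (glue A B) := by
  constructor
  · rintro ⟨i, j, l, hij, hjl, h1, h2⟩
    rw [Fin.lt_def] at hij hjl h1 h2
    rcases lt_trichotomy ((i : ℕ)) k with hi | hi | hi
    · -- i < k
      rcases lt_trichotomy ((l : ℕ)) k with hl | hl | hl
      · -- all of i < j < l < k : pattern in A
        have hj' : (j : ℕ) < k := by omega
        rw [glue_val_lt A B hi] at h1 h2
        rw [glue_val_lt A B hj'] at h2
        rw [glue_val_lt A B hl] at h1
        exact hA.1 ⟨⟨i, hi⟩, ⟨j, hj'⟩, ⟨l, hl⟩, by rw [Fin.lt_def]; exact hij,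
          by rw [Fin.lt_def]; exact hjl, by rw [Fin.lt_def]; exact h1,
          by rw [Fin.lt_def]; exact h2⟩
      · -- l = k : π l is max
        rw [glue_val_eq A B hl] at h1
        have := glue_val_le A B i; omega
      · -- i < k < l : π i < k ≤ π l
        rw [glue_val_lt A B hi] at h1
        obtain ⟨hj, he⟩ := glue_val_gt A B hl
        rw [he] at h1
        have := (A ⟨i, hi⟩).isLt; omega
    · -- i = k : π i is max
      rw [glue_val_eq A B hi] at h2
      have := glue_val_le A B j; omega
    · -- k < i < j < l : pattern in B
      have hj' : k < (j : ℕ) := by omega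
      have hl' : k < (l : ℕ) := by omega
      obtain ⟨hji, hei⟩ := glue_val_gt A B hi
      obtain ⟨hjj, hej⟩ := glue_val_gt A B hj'
      obtain ⟨hjl2, hel⟩ := glue_val_gt A B hl'
      rw [hei] at h1 h2
      rw [hej] at h2
      rw [hel] at h1
      exact hB.1 ⟨⟨(i : ℕ) - (k+1), hji⟩, ⟨(j : ℕ) - (k+1), hjj⟩, ⟨(l : ℕ) - (k+1), hjl2⟩,
        by rw [Fin.lt_def]; simp; omega, by rw [Fin.lt_def]; simp; omega,
        by rw [Fin.lt_def]; simp; omega, by rw [Fin.lt_def]; simp; omega⟩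
  · intro x y hxy hval
    rcases lt_trichotomy ((x : ℕ)) k with hx | hx | hx
    · rcases lt_trichotomy ((y : ℕ)) k with hy | hy | hy
      · rw [glue_val_lt A B hx, glue_val_lt A B hy] at hval
        exact hA.2 ⟨x, hx⟩ ⟨y, hy⟩ (by simpa using hxy) hval
      · rw [glue_val_lt A B hx, glue_val_eq A B hy] at hval
        have := (A ⟨x, hx⟩).isLt; omega
      · omega
    · -- x = k, y = k + 1
      rw [glue_val_eq A B hx] at hval
      have hy : k < (y : ℕ) := by omega
      obtain ⟨hjy, hey⟩ := glue_val_gt A B hy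
      rw [hey] at hval
      exact hTB ⟨⟨(y : ℕ) - (k+1), hjy⟩, by simp; omega,
        by have := (B ⟨(y : ℕ) - (k+1), hjy⟩).isLt; omega⟩
    · -- k < x < y : adjacency in B
      have hy : k < (y : ℕ) := by omega
      obtain ⟨hjx, hex⟩ := glue_val_gt A B hx
      obtain ⟨hjy, hey⟩ := glue_val_gt A B hy
      rw [hex, hey] at hval
      exact hB.2 ⟨(x : ℕ) - (k+1), hjx⟩ ⟨(y : ℕ) - (k+1), hjy⟩ (by simp; omega) (by omega)

lemma glue_max : (glue A B ⟨k, by omega⟩ : ℕ) = k + m := glue_val_eq A B rfl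

end GlueGood

section Extract
variable {k m : ℕ}

lemma extract_glue (π : Equiv.Perm (Fin (k + 1 + m))) (hπ : Good π)
    (hmax : (π ⟨k, by omega⟩ : ℕ) = k + m) :
    ∃ (A : Equiv.Perm (Fin k)) (B : Equiv.Perm (Fin m)),
      Good A ∧ Good B ∧ ¬ Tops B ∧ glue A B = π := by
  obtain ⟨kp, hkpv⟩ : ∃ kp : Fin (k + 1 + m), (kp : ℕ) = k := ⟨⟨k, by omega⟩, rfl⟩
  have hm2 : (π kp : ℕ) = k + m := by
    have hkpe : kp = ⟨k, by omega⟩ := Fin.ext hkpv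
    rw [hkpe]; exact hmax
  -- claim 1 : left values < right values
  have claim1 : ∀ i j : Fin (k + 1 + m), (i : ℕ) < k → k < (j : ℕ) →
      (π i : ℕ) < (π j : ℕ) := by
    intro i j hi hj
    by_contra hc
    have hne : (π i : ℕ) ≠ (π j : ℕ) := fun h => by
      have := π.injective (Fin.ext h); rw [this] at hi; omega
    have hji : (π j : ℕ) < (π i : ℕ) := by omega
    have hik : (π i : ℕ) < k + m := by
      have hle : (π i : ℕ) < k + 1 + m := (π i).isLt
      have hne2 : (π i : ℕ) ≠ (π kp : ℕ) := fun h => by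
        have := π.injective (Fin.ext h); rw [this, hkpv] at hi; omega
      omega
    exact hπ.1 ⟨i, kp, j, by rw [Fin.lt_def]; omega, by rw [Fin.lt_def]; omega,
      by rw [Fin.lt_def]; omega, by rw [Fin.lt_def]; omega⟩
  -- claim 2 : left values are < k
  have claim2 : ∀ i : Fin (k + 1 + m), (i : ℕ) < k → (π i : ℕ) < k := by
    intro i0 hi0
    by_contra hc
    push_neg at hc
    have hi0k : i0 ≠ kp := fun h => by rw [h, hkpv] at hi0; omega
    set T : Finset (Fin (k + 1 + m)) := insert i0 (insert kp (Finset.Ioi kp)) with hT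
    have hcardT : T.card = m + 2 := by
      rw [hT, Finset.card_insert_of_notMem, Finset.card_insert_of_notMem]
      · rw [Fin.card_Ioi, hkpv]; omega
      · simp
      · simp only [Finset.mem_insert, Finset.mem_Ioi]
        push_neg
        exact ⟨hi0k, by rw [Fin.le_def]; omega⟩
    have hmaps : ∀ x ∈ T, π x ∈ Finset.Ici kp := by
      intro x hx
      rw [Finset.mem_Ici, Fin.le_def, hkpv]
      simp only [hT, Finset.mem_insert, Finset.mem_Ioi] at hx
      rcases hx with h | h | h
      · subst h; omega
      · subst h; omega
      · rw [Fin.lt_def] at h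
        have := claim1 i0 x hi0 (by omega)
        omega
    have hinj : Set.InjOn π T := fun a _ b _ h => π.injective h
    have hcard := Finset.card_le_card_of_injOn π hmaps hinj
    rw [hcardT, Fin.card_Ici, hkpv] at hcard
    omega
  -- claim 3 : right values are ≥ k and < k + m
  have claim3 : ∀ j : Fin (k + 1 + m), k < (j : ℕ) →
      k ≤ (π j : ℕ) ∧ (π j : ℕ) < k + m := by
    intro j hj
    have hjkp : j ≠ kp := fun h => by rw [h, hkpv] at hj; omega
    constructor
    · by_contra hc
      push_neg at hc
      have himage : (Finset.Iio kp).image π = Finset.Iio kp := by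
        apply Finset.eq_of_subset_of_card_le
        · intro v hv
          simp only [Finset.mem_image] at hv
          obtain ⟨i, hi, rfl⟩ := hv
          rw [Finset.mem_Iio, Fin.lt_def] at hi
          rw [Finset.mem_Iio, Fin.lt_def]
          have := claim2 i (by omega)
          omega
        · rw [Finset.card_image_of_injective _ π.injective]
      have hmem : π j ∈ Finset.Iio kp := by
        rw [Finset.mem_Iio, Fin.lt_def]; omega
      rw [← himage, Finset.mem_image] at hmem
      obtain ⟨i, hi, hie⟩ := hmem
      have := π.injective hie
      subst this
      rw [Finset.mem_Iio, Fin.lt_def] at hi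
      omega
    · have h1 : (π j : ℕ) < k + 1 + m := (π j).isLt
      have h2 : (π j : ℕ) ≠ (π kp : ℕ) := fun h => by
        exact hjkp (π.injective (Fin.ext h))
      omega
  -- build the blocks
  set lpos : Fin k → Fin (k + 1 + m) := fun i => ⟨(i : ℕ), by have := i.isLt; omega⟩ with hlpos
  set pos : Fin m → Fin (k + 1 + m) := fun j => ⟨k + 1 + (j : ℕ), by have := j.isLt; omega⟩
    with hpos
  have hposgt : ∀ j : Fin m, k < ((pos j : Fin (k+1+m)) : ℕ) := fun j => by
    show k < k + 1 + (j : ℕ); omega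
  set Af : Fin k → Fin k := fun i => ⟨(π (lpos i) : ℕ), claim2 _ i.isLt⟩ with hAfd
  set Bf : Fin m → Fin m := fun j => ⟨(π (pos j) : ℕ) - k, by
    have := claim3 (pos j) (hposgt j); omega⟩ with hBfd
  have hAinj : Function.Injective Af := by
    intro a b h
    have h0 := congrArg Fin.val h
    have h' : (π (lpos a) : ℕ) = (π (lpos b) : ℕ) := h0
    have := π.injective (Fin.ext h')
    have h1 := congrArg Fin.val this
    have : (a : ℕ) = (b : ℕ) := h1
    exact Fin.ext this
  have hBinj : Function.Injective Bf := by
    intro a b h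
    have h0 := congrArg Fin.val h
    have h' : (π (pos a) : ℕ) - k = (π (pos b) : ℕ) - k := h0
    have ha := claim3 (pos a) (hposgt a)
    have hb := claim3 (pos b) (hposgt b)
    have h'' : (π (pos a) : ℕ) = (π (pos b) : ℕ) := by omega
    have := π.injective (Fin.ext h'')
    have h3 := congrArg Fin.val this
    have h4 : k + 1 + (a : ℕ) = k + 1 + (b : ℕ) := h3
    exact Fin.ext (by omega)
  set A : Equiv.Perm (Fin k) := Equiv.ofBijective Af (Finite.injective_iff_bijective.mp hAinj)
    with hAd
  set B : Equiv.Perm (Fin m) := Equiv.ofBijective Bf (Finite.injective_iff_bijective.mp hBinj)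
    with hBd
  have hAval : ∀ i : Fin k, (A i : ℕ) = (π (lpos i) : ℕ) := fun i => rfl
  have hBval : ∀ j : Fin m, (B j : ℕ) = (π (pos j) : ℕ) - k := fun j => rfl
  refine ⟨A, B, ⟨?_, ?_⟩, ⟨?_, ?_⟩, ?_, ?_⟩
  · -- Avoids231 A
    rintro ⟨i, j, l, hij, hjl, h1, h2⟩
    have h1' : (π (lpos l) : ℕ) < (π (lpos i) : ℕ) := h1
    have h2' : (π (lpos i) : ℕ) < (π (lpos j) : ℕ) := h2
    exact hπ.1 ⟨lpos i, lpos j, lpos l, by show (i:ℕ) < (j:ℕ); exact hij,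
      by show (j:ℕ) < (l:ℕ); exact hjl, h1', h2'⟩
  · -- NoAdj A
    intro i j hij hval
    have hval' : (π (lpos j) : ℕ) + 1 = (π (lpos i) : ℕ) := hval
    exact hπ.2 (lpos i) (lpos j) (by show (j:ℕ) = (i:ℕ) + 1; exact hij) hval'
  · -- Avoids231 B
    rintro ⟨i, j, l, hij, hjl, h1, h2⟩
    have h1' : (π (pos l) : ℕ) - k < (π (pos i) : ℕ) - k := h1
    have h2' : (π (pos i) : ℕ) - k < (π (pos j) : ℕ) - k := h2
    have hi3 := claim3 (pos i) (hposgt i)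
    have hj3 := claim3 (pos j) (hposgt j)
    have hl3 := claim3 (pos l) (hposgt l)
    have hij' : (i : ℕ) < (j : ℕ) := hij
    have hjl' : (j : ℕ) < (l : ℕ) := hjl
    exact hπ.1 ⟨pos i, pos j, pos l, by show k+1+(i:ℕ) < k+1+(j:ℕ); omega,
      by show k+1+(j:ℕ) < k+1+(l:ℕ); omega, by show (π (pos l):ℕ) < (π (pos i):ℕ); omega,
      by show (π (pos i):ℕ) < (π (pos j):ℕ); omega⟩
  · -- NoAdj B
    intro i j hij hval
    have hval' : (π (pos j) : ℕ) - k + 1 = (π (pos i) : ℕ) - k := hval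
    have hi3 := claim3 (pos i) (hposgt i)
    have hj3 := claim3 (pos j) (hposgt j)
    have hij' : (j : ℕ) = (i : ℕ) + 1 := hij
    exact hπ.2 (pos i) (pos j) (by show k+1+(j:ℕ) = k+1+(i:ℕ)+1; omega) (by omega)
  · -- ¬ Tops B
    rintro ⟨j0, hj00, hj0v⟩
    have hj0v' : (π (pos j0) : ℕ) - k + 1 = m := hj0v
    have hj3 := claim3 (pos j0) (hposgt j0)
    exact hπ.2 kp (pos j0) (by show k+1+(j0:ℕ) = (kp:ℕ) + 1; omega) (by omega)
  · -- glue A B = π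
    apply Equiv.ext
    intro x
    apply Fin.ext
    rcases lt_trichotomy ((x : ℕ)) k with h | h | h
    · rw [glue_val_lt A B h]
      show (π (lpos ⟨(x:ℕ), h⟩) : ℕ) = (π x : ℕ)
      have : lpos ⟨(x:ℕ), h⟩ = x := Fin.ext rfl
      rw [this]
    · rw [glue_val_eq A B h]
      have : x = kp := Fin.ext (by omega)
      rw [this, hm2]
    · obtain ⟨hj, he⟩ := glue_val_gt A B h
      rw [he]
      show k + ((π (pos ⟨(x:ℕ) - (k+1), hj⟩) : ℕ) - k) = (π x : ℕ)
      have hpe : pos ⟨(x:ℕ) - (k+1), hj⟩ = x := Fin.ext (by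
        show k + 1 + ((x:ℕ) - (k+1)) = (x:ℕ); omega)
      rw [hpe]
      have := claim3 x h
      omega

end Extract

section Count
open Equiv

noncomputable def gf (n : ℕ) : ℕ := Nat.card {π : Equiv.Perm (Fin n) // Good π}
noncomputable def gg (n : ℕ) : ℕ := Nat.card {π : Equiv.Perm (Fin n) // Good π ∧ ¬ Tops π}

lemma nat_card_sigma {ι : Type*} [Fintype ι] (F : ι → Type*) [∀ i, Finite (F i)] :
    Nat.card (Σ i, F i) = ∑ i, Nat.card (F i) := by
  letI : ∀ i, Fintype (F i) := fun i => Fintype.ofFinite _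
  simp [Nat.card_eq_fintype_card]

lemma card_fiber (k m : ℕ) (hk : k < k + 1 + m) :
    Nat.card {π : Equiv.Perm (Fin (k + 1 + m)) // Good π ∧ (π ⟨k, hk⟩ : ℕ) = k + m} =
      gf k * gg m := by
  rw [gf, gg, ← Nat.card_prod]
  refine Nat.card_congr (Equiv.symm ?_)
  apply Equiv.ofBijective
    (f := fun x : {A : Equiv.Perm (Fin k) // Good A} × {B : Equiv.Perm (Fin m) // Good B ∧ ¬ Tops B} =>
      (⟨glue x.1.1 x.2.1, glue_good x.1.1 x.2.1 x.1.2 x.2.2.1 x.2.2.2,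
        glue_val_eq x.1.1 x.2.1 rfl⟩ :
        {π : Equiv.Perm (Fin (k + 1 + m)) // Good π ∧ (π ⟨k, hk⟩ : ℕ) = k + m}))
  constructor
  · rintro ⟨⟨A, hA⟩, ⟨B, hB⟩⟩ ⟨⟨A', hA'⟩, ⟨B', hB'⟩⟩ h
    have hg : glue A B = glue A' B' := congrArg Subtype.val h
    have hAe : A = A' := by
      apply Equiv.ext
      intro i
      apply Fin.ext
      have h1 := glue_val_lt A B (i := ⟨(i : ℕ), by have := i.isLt; omega⟩) i.isLt
      have h2 := glue_val_lt A' B' (i := ⟨(i : ℕ), by have := i.isLt; omega⟩) i.isLt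
      rw [hg] at h1
      rw [h1] at h2
      have he : (⟨(i : ℕ), i.isLt⟩ : Fin k) = i := Fin.ext rfl
      rw [he] at h2
      omega
    have hBe : B = B' := by
      apply Equiv.ext
      intro j
      apply Fin.ext
      have hgt : k < ((⟨k + 1 + (j : ℕ), by have := j.isLt; omega⟩ : Fin (k+1+m)) : ℕ) := by
        show k < k + 1 + (j : ℕ); omega
      obtain ⟨hj1, h1⟩ := glue_val_gt A B hgt
      obtain ⟨hj2, h2⟩ := glue_val_gt A' B' hgt
      rw [hg] at h1
      rw [h1] at h2
      have he : (⟨((⟨k + 1 + (j : ℕ), by have := j.isLt; omega⟩ : Fin (k+1+m)) : ℕ) - (k+1), hj1⟩ : Fin m) = j := by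
        apply Fin.ext; show k + 1 + (j : ℕ) - (k + 1) = (j : ℕ); omega
      rw [he] at h2
      omega
    subst hAe; subst hBe; rfl
  · rintro ⟨π, hπ, hmax⟩
    obtain ⟨A, B, hA, hB, hTB, he⟩ := extract_glue π hπ hmax
    exact ⟨⟨⟨A, hA⟩, ⟨B, hB, hTB⟩⟩, Subtype.ext he⟩

lemma card_fiber' (N k : ℕ) (hk : k < N) :
    Nat.card {π : Equiv.Perm (Fin N) // Good π ∧ (π ⟨k, hk⟩ : ℕ) + 1 = N} =
      gf k * gg (N - 1 - k) := by
  obtain ⟨m, rfl⟩ : ∃ m, N = k + 1 + m := ⟨N - 1 - k, by omega⟩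
  rw [show k + 1 + m - 1 - k = m by omega]
  rw [← card_fiber k m hk]
  apply Nat.card_congr
  apply Equiv.subtypeEquivRight
  intro π
  have : (π ⟨k, hk⟩ : ℕ) < k + 1 + m := (π ⟨k, hk⟩).isLt
  constructor
  · rintro ⟨h1, h2⟩; exact ⟨h1, by omega⟩
  · rintro ⟨h1, h2⟩; exact ⟨h1, by omega⟩

lemma gf_succ (n : ℕ) : gf (n + 1) = ∑ k ∈ Finset.range (n + 1), gf k * gg (n - k) := by
  rw [gf]
  have e1 : {π : Equiv.Perm (Fin (n+1)) // Good π} ≃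
      Σ k : Fin (n+1), {x : {π : Equiv.Perm (Fin (n+1)) // Good π} //
        x.1.symm (Fin.last n) = k} :=
    (Equiv.sigmaFiberEquiv _).symm
  rw [Nat.card_congr e1, nat_card_sigma]
  rw [← Fin.sum_univ_eq_sum_range (fun k => gf k * gg (n - k)) (n+1)]
  apply Finset.sum_congr rfl
  intro k _
  have e2 : {x : {π : Equiv.Perm (Fin (n+1)) // Good π} // x.1.symm (Fin.last n) = k} ≃
      {π : Equiv.Perm (Fin (n+1)) // Good π ∧ (π ⟨(k : ℕ), k.isLt⟩ : ℕ) + 1 = n + 1} := by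
    refine (Equiv.subtypeSubtypeEquivSubtypeInter (fun π : Equiv.Perm (Fin (n+1)) => Good π)
      (fun π => π.symm (Fin.last n) = k)).trans (Equiv.subtypeEquivRight ?_)
    intro π
    have hke : (⟨(k : ℕ), k.isLt⟩ : Fin (n+1)) = k := Fin.ext rfl
    rw [hke]
    constructor
    · rintro ⟨h1, h2⟩
      refine ⟨h1, ?_⟩
      have hπk : π k = Fin.last n := by rw [← h2, Equiv.apply_symm_apply]
      rw [hπk]; simp
    · rintro ⟨h1, h2⟩
      refine ⟨h1, ?_⟩
      have hπk : π k = Fin.last n := Fin.ext (by simp; omega)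
      rw [← hπk, Equiv.symm_apply_apply]
  rw [Nat.card_congr e2, card_fiber' (n+1) (k : ℕ) k.isLt,
    show n + 1 - 1 - (k : ℕ) = n - (k : ℕ) from by omega]

lemma unique_perm_zero : ∀ π : Equiv.Perm (Fin 0), π = 1 := fun π => Equiv.ext fun x => x.elim0

lemma gf_zero : gf 0 = 1 := by
  rw [gf]
  have h : ∀ π : Equiv.Perm (Fin 0), Good π := fun π =>
    ⟨by rintro ⟨i, _⟩; exact i.elim0, fun i => i.elim0⟩
  haveI : Nonempty {π : Equiv.Perm (Fin 0) // Good π} := ⟨⟨1, h 1⟩⟩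
  haveI : Subsingleton {π : Equiv.Perm (Fin 0) // Good π} :=
    ⟨fun a b => Subtype.ext (by rw [unique_perm_zero a.1, unique_perm_zero b.1])⟩
  exact Nat.card_unique

lemma gg_zero : gg 0 = 1 := by
  rw [gg]
  have h : ∀ π : Equiv.Perm (Fin 0), Good π ∧ ¬ Tops π := fun π =>
    ⟨⟨by rintro ⟨i, _⟩; exact i.elim0, fun i => i.elim0⟩, by rintro ⟨i, _⟩; exact i.elim0⟩
  haveI : Nonempty {π : Equiv.Perm (Fin 0) // Good π ∧ ¬ Tops π} := ⟨⟨1, h 1⟩⟩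
  haveI : Subsingleton {π : Equiv.Perm (Fin 0) // Good π ∧ ¬ Tops π} :=
    ⟨fun a b => Subtype.ext (by rw [unique_perm_zero a.1, unique_perm_zero b.1])⟩
  exact Nat.card_unique

lemma gf_eq_gg_add (m : ℕ) : gf (m + 1) = gg m + gg (m + 1) := by
  have e1 : {π : Equiv.Perm (Fin (m+1)) // Good π} ≃
      {π : Equiv.Perm (Fin (m+1)) // Good π ∧ Tops π} ⊕
        {π : Equiv.Perm (Fin (m+1)) // Good π ∧ ¬ Tops π} := by
    classical
    exact (Equiv.sumCompl (fun π : {π : Equiv.Perm (Fin (m+1)) // Good π} => Tops π.1)).symm.trans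
      (Equiv.sumCongr
        (Equiv.subtypeSubtypeEquivSubtypeInter (fun π : Equiv.Perm (Fin (m+1)) => Good π)
          (fun π => Tops π))
        (Equiv.subtypeSubtypeEquivSubtypeInter (fun π : Equiv.Perm (Fin (m+1)) => Good π)
          (fun π => ¬ Tops π)))
  have h1 : gf (m+1) = Nat.card {π : Equiv.Perm (Fin (m+1)) // Good π ∧ Tops π} +
      Nat.card {π : Equiv.Perm (Fin (m+1)) // Good π ∧ ¬ Tops π} := by
    rw [gf, Nat.card_congr e1, Nat.card_sum]
  rw [h1]
  have h3 : Nat.card {π : Equiv.Perm (Fin (m+1)) // Good π ∧ ¬ Tops π} = gg (m+1) := rfl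
  rw [h3]
  congr 1
  have e2 : {π : Equiv.Perm (Fin (m+1)) // Good π ∧ Tops π} ≃
      {π : Equiv.Perm (Fin (m+1)) // Good π ∧ (π ⟨0, by omega⟩ : ℕ) + 1 = m + 1} :=
    Equiv.subtypeEquivRight (by
      intro π
      constructor
      · rintro ⟨h1, i, hi0, hiv⟩
        have : i = ⟨0, by omega⟩ := Fin.ext hi0
        rw [this] at hiv
        exact ⟨h1, hiv⟩
      · rintro ⟨h1, h2⟩
        exact ⟨h1, ⟨0, by omega⟩, rfl, h2⟩)
  rw [Nat.card_congr e2, card_fiber' (m+1) 0 (by omega), gf_zero, one_mul,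
    show m + 1 - 1 - 0 = m from by omega]

end Count


section Final

lemma gf_succ' (n : ℕ) (h : 1 ≤ n) :
    gf (n + 1) = ∑ k ∈ Finset.range n, gf k * gf (n - k) := by
  obtain ⟨t, rfl⟩ : ∃ t, n = t + 1 := ⟨n - 1, by omega⟩
  have h1 := gf_succ (t + 1)
  have h2 := gf_succ t
  rw [Finset.sum_range_succ] at h1
  have key : ∀ k ∈ Finset.range (t + 1),
      gf k * gg (t + 1 - k) + gf k * gg (t - k) = gf k * gf (t + 1 - k) := by
    intro k hk
    rw [Finset.mem_range] at hk
    rw [show t + 1 - k = (t - k) + 1 from by omega, gf_eq_gg_add (t - k)]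
    ring
  have h3 : gf (t + 1 + 1) + gf (t + 1) =
      (∑ k ∈ Finset.range (t + 1), gf k * gf (t + 1 - k)) + gf (t + 1) := by
    calc gf (t + 1 + 1) + gf (t + 1)
        = ((∑ k ∈ Finset.range (t + 1), gf k * gg (t + 1 - k)) +
            gf (t + 1) * gg (t + 1 - (t + 1))) +
          ∑ k ∈ Finset.range (t + 1), gf k * gg (t - k) := by rw [← h1, ← h2]
      _ = (∑ k ∈ Finset.range (t + 1), (gf k * gg (t + 1 - k) + gf k * gg (t - k))) +
          gf (t + 1) := by
          rw [show t + 1 - (t + 1) = 0 from by omega, gg_zero, mul_one,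
            Finset.sum_add_distrib]
          ring
      _ = (∑ k ∈ Finset.range (t + 1), gf k * gf (t + 1 - k)) + gf (t + 1) := by
          rw [Finset.sum_congr rfl key]
  omega

lemma gf_one : gf 1 = 1 := by
  rw [gf_succ 0]
  simp [gf_zero, gg_zero]

lemma gf_motzkin (n : ℕ) : gf (n + 1) = motzkin n := by
  induction n using Nat.strong_induction_on with
  | _ n ih =>
    match n with
    | 0 => rw [gf_one, motzkin_zero]
    | Nat.succ t =>
      rw [gf_succ' (t + 1) (by omega), motzkin_succ, Finset.sum_range_succ']
      have e0 : gf 0 * gf (t + 1 - 0) = motzkin t := by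
        rw [gf_zero, one_mul, show t + 1 - 0 = t + 1 from by omega]
        exact ih t (by omega)
      rw [e0]
      have eterm : ∀ k ∈ Finset.range t,
          gf (k + 1) * gf (t + 1 - (k + 1)) = motzkin k * motzkin (t - 1 - k) := by
        intro k hk
        rw [Finset.mem_range] at hk
        rw [ih k (by omega), show t + 1 - (k + 1) = (t - 1 - k) + 1 from by omega,
          ih (t - 1 - k) (by omega)]
      rw [Finset.sum_congr rfl eterm,
        ← Fin.sum_univ_eq_sum_range (fun k => motzkin k * motzkin (t - 1 - k)) t]
      ring

lemma motzkinCount_eq_gf (n : ℕ) : motzkinCount n = gf n := by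
  rw [motzkinCount, gf]
  apply Nat.card_congr
  apply Equiv.subtypeEquivRight
  intro π
  constructor
  · rintro ⟨h1, h2⟩
    exact ⟨h1, fun i j hj hv => h2 ((containsMesh_iff π).mpr ⟨i, j, hj, hv⟩)⟩
  · rintro ⟨h1, h2⟩
    refine ⟨h1, fun hc => ?_⟩
    obtain ⟨i, j, hj, hv⟩ := (containsMesh_iff π).mp hc
    exact h2 i j hj hv

lemma motzkinCount_zero : motzkinCount 0 = 1 := by rw [motzkinCount_eq_gf, gf_zero]

lemma motzkinCount_pos (n : ℕ) (h : 1 ≤ n) : motzkinCount n = motzkin (n - 1) := by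
  obtain ⟨t, rfl⟩ : ∃ t, n = t + 1 := ⟨n - 1, by omega⟩
  rw [motzkinCount_eq_gf, gf_motzkin]
  simp

lemma sum_mc (n : ℕ) (h : 1 ≤ n) :
    ∑ k ∈ Finset.range (n + 1), motzkinCount k * motzkinCount (n - k) =
      motzkinCount (n + 1) + motzkinCount n := by
  have he : ∀ k, motzkinCount k = gf k := motzkinCount_eq_gf
  simp only [he]
  rw [Finset.sum_range_succ, show n - n = 0 from by omega, gf_zero, mul_one,
    ← gf_succ' n h]

end Final

lemma motzkinCount_one : motzkinCount 1 = 1 := by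
  rw [motzkinCount_pos 1 le_rfl]
  exact motzkin_zero

/-- The avoiders of `{231, (21, {⟨0,1⟩,⟨1,0⟩,⟨1,1⟩,⟨1,2⟩,⟨2,1⟩})}` are counted
by the Motzkin numbers (offset 1), and their generating function `P` satisfies
`P = x·P² - x·(P - 1) + 1`. -/
theorem motzkinCount_eq_motzkin :
    motzkinCount 0 = 1 ∧ (∀ n : ℕ, 1 ≤ n → motzkinCount n = motzkin (n - 1)) ∧
      ((PowerSeries.mk fun n => (motzkinCount n : ℚ)) =
        PowerSeries.X * (PowerSeries.mk fun n => (motzkinCount n : ℚ)) ^ 2 -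
          PowerSeries.X * ((PowerSeries.mk fun n => (motzkinCount n : ℚ)) - 1) + 1) := by
  refine ⟨motzkinCount_zero, motzkinCount_pos, ?_⟩
  apply PowerSeries.ext
  intro n
  cases n with
  | zero =>
    simp [motzkinCount_zero]
  | succ t =>
    rw [map_add, map_sub, PowerSeries.coeff_succ_X_mul, PowerSeries.coeff_succ_X_mul,
      map_sub, PowerSeries.coeff_mk, sq, PowerSeries.coeff_mul,
      Finset.Nat.sum_antidiagonal_eq_sum_range_succ_mk]
    simp only [PowerSeries.coeff_mk, PowerSeries.coeff_one]
    cases t with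
    | zero =>
      simp [motzkinCount_zero, motzkinCount_one]
    | succ s =>
      have hs := sum_mc (s + 1) (by omega)
      have hq : (∑ k ∈ Finset.range (s + 2), (motzkinCount k : ℚ) * motzkinCount (s + 1 - k)) =
          (motzkinCount (s + 2) : ℚ) + motzkinCount (s + 1) := by
        exact_mod_cast congrArg (Nat.cast (R := ℚ)) hs
      simp only [Nat.succ_ne_zero, if_false]
      rw [hq]
      ring
end

section
/- The number of permutations of length n avoiding 231 and the mesh pattern (12, {⟨1,0⟩,⟨1,1⟩,⟨1,2⟩,⟨2,0⟩,⟨2,1⟩}) equals the number of permutations of length n avoiding 231 and the mesh pattern (21, {⟨0,1⟩,⟨1,0⟩,⟨1,1⟩,⟨1,2⟩,⟨2,1⟩}); i.e., these two mesh patterns are Wilf-equivalent under the dominating pattern 231. -/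
set_option linter.unreachableTactic false
set_option linter.unusedTactic false
set_option maxHeartbeats 1000000

open List

def Occ231 (w : List ℕ) : Prop := ∃ a b c : ℕ, [a, b, c] <+ w ∧ c < a ∧ a < b

def OccA (w : List ℕ) : Prop :=
  ∃ u v : List ℕ, ∃ a b : ℕ, w = u ++ a :: b :: v ∧ a < b ∧ ∀ x ∈ v, b < x

def OccB (w : List ℕ) : Prop :=
  ∃ u v : List ℕ, ∃ a b : ℕ, w = u ++ a :: b :: v ∧ b < a ∧ ∀ x ∈ w, ¬(b < x ∧ x < a)

def HM (w : List ℕ) : Prop := ∃ a : ℕ, ∃ t : List ℕ, w = a :: t ∧ ∀ x ∈ t, x < a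

def GoodA (w : List ℕ) : Prop := ¬Occ231 w ∧ ¬OccA w
def GoodB (w : List ℕ) : Prop := ¬Occ231 w ∧ ¬OccB w
def GoodC (w : List ℕ) : Prop := GoodB w ∧ ¬HM w

section MapInv

variable {p : ℕ} {w : List ℕ}

lemma occ231_map_add : Occ231 (w.map (· + p)) ↔ Occ231 w := by
  constructor
  · rintro ⟨a, b, c, hs, h1, h2⟩
    rw [sublist_map_iff] at hs
    obtain ⟨l', hl', he⟩ := hs
    match l', he with
    | [a', b', c'], he =>
      simp only [map_cons, map_nil, cons.injEq] at he
      obtain ⟨ha, hb, hc, -⟩ := he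
      exact ⟨a', b', c', hl', by omega, by omega⟩
  · rintro ⟨a, b, c, hs, h1, h2⟩
    exact ⟨a + p, b + p, c + p, by simpa using hs.map (· + p), by omega, by omega⟩

lemma occA_map_add : OccA (w.map (· + p)) ↔ OccA w := by
  constructor
  · rintro ⟨u, v, a, b, he, h1, h2⟩
    rw [map_eq_append_iff] at he
    obtain ⟨u', r', hw, hu, hr⟩ := he
    rw [map_eq_cons_iff] at hr
    obtain ⟨a', t', hr', ha, ht⟩ := hr
    rw [map_eq_cons_iff] at ht
    obtain ⟨b', v', ht', hb, hv⟩ := ht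
    subst hw hr' ht'
    refine ⟨u', v', a', b', rfl, by omega, fun x hx => ?_⟩
    have : x + p ∈ v := hv ▸ mem_map_of_mem (f := (· + p)) hx
    have := h2 _ this; omega
  · rintro ⟨u, v, a, b, he, h1, h2⟩
    refine ⟨u.map (· + p), v.map (· + p), a + p, b + p, by simp [he], by omega, ?_⟩
    simp only [mem_map]
    rintro x ⟨y, hy, rfl⟩
    have := h2 y hy; omega

lemma occB_map_add : OccB (w.map (· + p)) ↔ OccB w := by
  constructor
  · rintro ⟨u, v, a, b, he, h1, h2⟩
    rw [map_eq_append_iff] at he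
    obtain ⟨u', r', hw, hu, hr⟩ := he
    rw [map_eq_cons_iff] at hr
    obtain ⟨a', t', hr', ha, ht⟩ := hr
    rw [map_eq_cons_iff] at ht
    obtain ⟨b', v', ht', hb, hv⟩ := ht
    subst hw hr' ht'
    refine ⟨u', v', a', b', rfl, by omega, fun x hx => ?_⟩
    have := h2 (x + p) (mem_map_of_mem hx); omega
  · rintro ⟨u, v, a, b, he, h1, h2⟩
    refine ⟨u.map (· + p), v.map (· + p), a + p, b + p, by simp [he], by omega, ?_⟩
    simp only [mem_map]
    rintro x ⟨y, hy, rfl⟩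
    have := h2 y hy; omega

lemma hm_map_add : HM (w.map (· + p)) ↔ HM w := by
  constructor
  · rintro ⟨a, t, he, h⟩
    rw [map_eq_cons_iff] at he
    obtain ⟨a', t', he', ha, ht⟩ := he
    subst he'
    refine ⟨a', t', rfl, fun x hx => ?_⟩
    have := h (x + p) (ht ▸ mem_map_of_mem (f := (· + p)) hx); omega
  · rintro ⟨a, t, he, h⟩
    refine ⟨a + p, t.map (· + p), by simp [he], ?_⟩
    simp only [mem_map]
    rintro x ⟨y, hy, rfl⟩
    have := h y hy; omega

lemma goodA_map_add : GoodA (w.map (· + p)) ↔ GoodA w := by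
  unfold GoodA; rw [occ231_map_add, occA_map_add]

lemma goodB_map_add : GoodB (w.map (· + p)) ↔ GoodB w := by
  unfold GoodB; rw [occ231_map_add, occB_map_add]

lemma goodC_map_add : GoodC (w.map (· + p)) ↔ GoodC w := by
  unfold GoodC; rw [goodB_map_add, hm_map_add]

end MapInv



section Decomp
variable {L R : List ℕ} {M : ℕ}

lemma occ231_decomp (hL : ∀ x ∈ L, x < M) (hR : ∀ x ∈ R, x < M)
    (hLR : ∀ a ∈ L, ∀ b ∈ R, a < b) :
    Occ231 (L ++ M :: R) ↔ Occ231 L ∨ Occ231 R := by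
  constructor
  · rintro ⟨a, b, c, hs, h1, h2⟩
    rw [sublist_append_iff] at hs
    obtain ⟨s1, s2, he, hs1, hs2⟩ := hs
    rw [sublist_cons_iff] at hs2
    rcases s1 with _ | ⟨x1, _ | ⟨x2, _ | ⟨x3, _ | ⟨x4, s⟩⟩⟩⟩
    · -- s1 = [], s2 = [a,b,c]
      simp only [nil_append] at he
      subst he
      rcases hs2 with h | ⟨r, hr, hr'⟩
      · exact Or.inr ⟨a, b, c, h, h1, h2⟩
      · simp only [cons.injEq] at hr
        obtain ⟨rfl, rfl⟩ := hr
        have hb := hr'.subset (show b ∈ [b, c] by simp)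
        have := hR b hb; omega
    · -- s1 = [a], s2 = [b,c]
      simp only [cons_append, nil_append, cons.injEq] at he
      obtain ⟨rfl, he⟩ := he
      subst he
      have ha := hs1.subset (show a ∈ [a] by simp)
      rcases hs2 with h | ⟨r, hr, hr'⟩
      · have hc := h.subset (show c ∈ [b, c] by simp)
        exact absurd (hLR a ha c hc) (by omega)
      · simp only [cons.injEq] at hr
        obtain ⟨rfl, rfl⟩ := hr
        have hc := hr'.subset (show c ∈ [c] by simp)
        exact absurd (hLR a ha c hc) (by omega)
    · -- s1 = [a,b], s2 = [c]
      simp only [cons_append, nil_append, cons.injEq] at he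
      obtain ⟨rfl, rfl, he⟩ := he
      subst he
      have ha := hs1.subset (show a ∈ [a, b] by simp)
      rcases hs2 with h | ⟨r, hr, hr'⟩
      · have hc := h.subset (show c ∈ [c] by simp)
        exact absurd (hLR a ha c hc) (by omega)
      · simp only [cons.injEq] at hr
        obtain ⟨rfl, -⟩ := hr
        have := hL a ha; omega
    · -- s1 = [a,b,c]
      simp only [cons_append, nil_append, cons.injEq] at he
      obtain ⟨rfl, rfl, rfl, he⟩ := he
      exact Or.inl ⟨a, b, c, hs1, h1, h2⟩
    · exfalso
      apply_fun List.length at he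
      simp at he
  · rintro (⟨a, b, c, hs, h1, h2⟩ | ⟨a, b, c, hs, h1, h2⟩)
    · exact ⟨a, b, c, hs.trans (sublist_append_left _ _), h1, h2⟩
    · exact ⟨a, b, c, hs.trans ((sublist_cons_self _ _).trans (sublist_append_right _ _)), h1, h2⟩
end Decomp


section Decomp
variable {L R : List ℕ} {M : ℕ}

lemma occA_decomp (hL : ∀ x ∈ L, x < M) (hR : ∀ x ∈ R, x < M)
    (hLR : ∀ a ∈ L, ∀ b ∈ R, a < b) :
    OccA (L ++ M :: R) ↔ OccA L ∨ OccA R ∨ (L ≠ [] ∧ R = []) := by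
  constructor
  · rintro ⟨u, v, a, b, he, h1, h2⟩
    rw [append_eq_append_iff] at he
    rcases he with ⟨r', hu, he⟩ | ⟨c', hLe, he⟩
    · rcases r' with _ | ⟨m', r''⟩
      · simp only [nil_append, cons.injEq] at he
        obtain ⟨rfl, rfl⟩ := he
        have := hR b (by simp); omega
      · simp only [cons_append, cons.injEq] at he
        obtain ⟨rfl, hRe⟩ := he
        exact Or.inr (Or.inl ⟨r'', v, a, b, hRe, h1, h2⟩)
    · rcases c' with _ | ⟨a', _ | ⟨b', t⟩⟩
      · simp only [nil_append, cons.injEq] at he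
        obtain ⟨rfl, rfl⟩ := he
        have := hR b (by simp); omega
      · simp only [cons_append, nil_append, cons.injEq] at he
        obtain ⟨rfl, rfl, hvR⟩ := he
        right; right
        refine ⟨by simp [hLe], ?_⟩
        subst hvR
        cases v with
        | nil => rfl
        | cons x t =>
          have h3 := h2 x (by simp)
          have h4 := hR x (by simp)
          omega
      · simp only [cons_append, cons.injEq] at he
        obtain ⟨rfl, rfl, hv⟩ := he
        left
        exact ⟨u, t, a, b, hLe, h1, fun x hx => h2 x (by rw [hv]; simp [hx])⟩
  · rintro (⟨u, t, a, b, he, h1, h2⟩ | ⟨u, v, a, b, he, h1, h2⟩ | ⟨hL0, rfl⟩)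
    · have hbL : b ∈ L := by rw [he]; simp
      refine ⟨u, t ++ M :: R, a, b, by simp [he], h1, ?_⟩
      intro x hx
      simp only [mem_append, mem_cons] at hx
      rcases hx with h | h | h
      · exact h2 x h
      · subst h; exact hL b hbL
      · exact hLR b hbL x h
    · exact ⟨L ++ M :: u, v, a, b, by simp [he], h1, h2⟩
    · obtain ⟨u, a, rfl⟩ : ∃ u a, L = u ++ [a] := by
        rcases eq_nil_or_concat L with rfl | ⟨u, a, hc⟩
        · exact absurd rfl hL0
        · exact ⟨u, a, by rw [hc, concat_eq_append]⟩
      refine ⟨u, [], a, M, by simp, hL a (by simp), by simp⟩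

lemma occB_decomp (hL : ∀ x ∈ L, x < M) (hR : ∀ x ∈ R, x < M)
    (hLR : ∀ a ∈ L, ∀ b ∈ R, a < b) (hnd : R.Nodup) :
    OccB (L ++ M :: R) ↔ OccB L ∨ OccB R ∨ HM R := by
  constructor
  · rintro ⟨u, v, a, b, he, h1, h2⟩
    rw [append_eq_append_iff] at he
    rcases he with ⟨r', hu, he⟩ | ⟨c', hLe, he⟩
    · rcases r' with _ | ⟨m', r''⟩
      · -- a = M, R = b :: v : junction
        simp only [nil_append, cons.injEq] at he
        obtain ⟨rfl, hRe⟩ := he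
        right; right
        refine ⟨b, v, hRe, fun x hx => ?_⟩
        have hxR : x ∈ R := by rw [hRe]; simp [hx]
        have := h2 x (by simp [hxR])
        have := hR x hxR
        have hxb : x ≠ b := by
          rw [hRe] at hnd
          intro hxb
          exact (nodup_cons.mp hnd).1 (hxb ▸ hx)
        omega
      · simp only [cons_append, cons.injEq] at he
        obtain ⟨rfl, hRe⟩ := he
        right; left
        refine ⟨r'', v, a, b, hRe, h1, fun x hx => h2 x ?_⟩
        rw [hRe] at hx ⊢
        simp only [mem_append, mem_cons] at hx ⊢
        tauto
    · rcases c' with _ | ⟨a', _ | ⟨b', t⟩⟩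
      · simp only [nil_append, cons.injEq] at he
        obtain ⟨rfl, hRe⟩ := he
        right; right
        refine ⟨b, v, hRe.symm, fun x hx => ?_⟩
        have hxR : x ∈ R := by rw [← hRe]; simp [hx]
        have := h2 x (by simp [hxR])
        have := hR x hxR
        have hxb : x ≠ b := by
          rw [← hRe] at hnd
          intro hxb
          exact (nodup_cons.mp hnd).1 (hxb ▸ hx)
        omega
      · simp only [cons_append, nil_append, cons.injEq] at he
        obtain ⟨rfl, rfl, hvR⟩ := he
        have : a ∈ L := by rw [hLe]; simp
        have := hL a this; omega
      · simp only [cons_append, cons.injEq] at he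
        obtain ⟨rfl, rfl, hv⟩ := he
        left
        refine ⟨u, t, a, b, hLe, h1, fun x hx => h2 x ?_⟩
        simp [hx]
  · rintro (⟨u, t, a, b, he, h1, h2⟩ | ⟨u, v, a, b, he, h1, h2⟩ | ⟨b, t, hRe, hHM⟩)
    · have haL : a ∈ L := by rw [he]; simp
      refine ⟨u, t ++ M :: R, a, b, by simp [he], h1, fun x hx => ?_⟩
      simp only [mem_append, mem_cons] at hx
      rcases hx with h | h | h
      · exact h2 x h
      · subst h; have := hL a haL; omega
      · have := hLR a haL x h; omega
    · refine ⟨L ++ M :: u, v, a, b, by simp [he], h1, fun x hx => ?_⟩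
      have haR : a ∈ R := by rw [he]; simp
      simp only [mem_append, mem_cons] at hx
      rcases hx with h | h | h
      · have hbR : b ∈ R := by rw [he]; simp
        have := hLR x h b hbR; omega
      · subst h; have := hR a haR; omega
      · exact h2 x h
    · subst hRe
      refine ⟨L, t, M, b, rfl, hR b (by simp), fun x hx => ?_⟩
      simp only [mem_append, mem_cons] at hx
      rcases hx with h | h | h
      · have := hLR x h b (by simp); omega
      · omega
      · rcases h with h | h
        · omega
        · have := hHM x h; omega
end Decomp

section Split
variable {m p q : ℕ} {w L R : List ℕ}

lemma takeWhile_of_append {m : ℕ} (L R : List ℕ) (h : ∀ x ∈ L, x ≠ m) :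
    (L ++ m :: R).takeWhile (· ≠ m) = L ∧ (L ++ m :: R).dropWhile (· ≠ m) = m :: R := by
  constructor
  · rw [takeWhile_append_of_pos (by simpa using h)]
    simp [takeWhile_cons]
  · rw [dropWhile_append_of_pos (by simpa using h)]
    simp [dropWhile_cons]

/-- split a permutation of `range (m+1)` at the maximum `m`. -/
lemma split_at_max (hw : w ~ List.range (m + 1)) :
    ∃ L R, w = L ++ m :: R ∧ (∀ x ∈ L, x < m) ∧ (∀ x ∈ R, x < m) ∧
      w.takeWhile (· ≠ m) = L ∧ w.dropWhile (· ≠ m) = m :: R := by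
  have hnd : w.Nodup := hw.nodup_iff.mpr (nodup_range)
  have hm : m ∈ w := hw.mem_iff.mpr (by simp)
  obtain ⟨L, R, rfl⟩ := List.append_of_mem hm
  obtain ⟨hndL, hndMR, hdisj⟩ := nodup_append.mp hnd
  have hbd : ∀ x ∈ L ++ m :: R, x < m + 1 := fun x hx => by
    have := hw.mem_iff.mp hx; simp at this; omega
  have hL : ∀ x ∈ L, x < m := fun x hx => by
    have h1 := hbd x (by simp [hx])
    have : x ≠ m := fun hc => hdisj x hx m (by simp) hc
    omega
  have hR : ∀ x ∈ R, x < m := fun x hx => by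
    have h1 := hbd x (by simp [hx])
    have : x ≠ m := fun hc => (nodup_cons.mp hndMR).1 (hc ▸ hx)
    omega
  have htw := takeWhile_of_append L R (fun x hx => Nat.ne_of_lt (hL x hx))
  exact ⟨L, R, rfl, hL, hR, htw.1, htw.2⟩

/-- the value-split lemma. -/
lemma value_split (hw : (L ++ m :: R) ~ List.range (m + 1))
    (hcross : ∀ a ∈ L, ∀ b ∈ R, a < b) :
    L ~ List.range L.length ∧ R.map (· - L.length) ~ List.range R.length ∧
      (R.map (· - L.length)).map (· + L.length) = R ∧ L.length + R.length = m := by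
  set p := L.length with hp
  have hnd : (L ++ m :: R).Nodup := hw.nodup_iff.mpr (nodup_range)
  obtain ⟨hndL, hndMR, hdisj⟩ := nodup_append.mp hnd
  have hndR : R.Nodup := (nodup_cons.mp hndMR).2
  have hlen : p + R.length = m := by
    have := hw.length_eq
    simp at this
    omega
  have hbd : ∀ x ∈ L ++ m :: R, x < m + 1 := fun x hx => by
    have := hw.mem_iff.mp hx; simp at this; omega
  have hLm : ∀ x ∈ L, x < m := fun x hx => by
    have h1 := hbd x (by simp [hx])
    have : x ≠ m := fun hc => hdisj x hx m (by simp) hc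
    omega
  have hRm : ∀ x ∈ R, x < m := fun x hx => by
    have h1 := hbd x (by simp [hx])
    have : x ≠ m := fun hc => (nodup_cons.mp hndMR).1 (hc ▸ hx)
    omega
  have hmem : ∀ v, v < m + 1 → v ∈ L ++ m :: R := fun v hv =>
    hw.mem_iff.mpr (by simp [hv])
  have hLlt : ∀ x ∈ L, x < p := by
    intro x hx
    by_contra hc
    push_neg at hc
    have hex : ∃ v, v < p ∧ v ∉ L := by
      by_contra hall
      push_neg at hall
      have hsub : Finset.range p ⊆ L.toFinset := fun v hv => by
        simp only [List.mem_toFinset]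
        exact hall v (Finset.mem_range.mp hv)
      have hcard : L.toFinset.card = p := by
        rw [List.toFinset_card_of_nodup hndL]
      have heq : L.toFinset = Finset.range p :=
        (Finset.eq_of_subset_of_card_le hsub (by simp [hcard])).symm
      have hxF : x ∈ L.toFinset := by simp [hx]
      rw [heq] at hxF
      simp at hxF
      omega
    obtain ⟨v, hv1, hv2⟩ := hex
    have hvw := hmem v (by omega)
    have hvR : v ∈ R := by
      simp only [mem_append, mem_cons] at hvw
      rcases hvw with h | h | h
      · exact absurd h hv2
      · omega
      · exact h
    have := hcross x hx v hvR
    omega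
  have hrange : (List.range p).toFinset = Finset.range p := by ext x; simp
  have hLperm : L ~ List.range p := by
    apply List.perm_of_nodup_nodup_toFinset_eq hndL (nodup_range)
    rw [hrange]
    apply Finset.eq_of_subset_of_card_le
    · intro v hv
      simp only [List.mem_toFinset] at hv
      exact Finset.mem_range.mpr (hLlt v hv)
    · simp [List.toFinset_card_of_nodup hndL]; omega
  have hRge : ∀ x ∈ R, p ≤ x := by
    intro x hx
    by_contra hc
    push_neg at hc
    have hxL : x ∈ L := hLperm.mem_iff.mpr (by simp; omega)
    exact hdisj x hxL x (by simp [hx]) rfl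
  have hmapmap : (R.map (· - p)).map (· + p) = R := by
    rw [List.map_map]
    have : ∀ x ∈ R, ((· + p) ∘ (· - p)) x = id x := fun x hx => by
      have := hRge x hx; simp; omega
    rw [List.map_congr_left this, List.map_id]
  have hndR' : (R.map (· - p)).Nodup := by
    apply hndR.map_on
    intro x hx y hy hxy
    have := hRge x hx; have := hRge y hy
    omega
  have hR'perm : R.map (· - p) ~ List.range R.length := by
    apply List.perm_of_nodup_nodup_toFinset_eq hndR' (nodup_range)
    have hrange' : (List.range R.length).toFinset = Finset.range R.length := by ext x; simp
    rw [hrange']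
    apply Finset.eq_of_subset_of_card_le
    · intro v hv
      simp only [List.mem_toFinset, List.mem_map] at hv
      obtain ⟨x, hx, rfl⟩ := hv
      have := hRge x hx; have := hRm x hx
      exact Finset.mem_range.mpr (by omega)
    · simp [List.toFinset_card_of_nodup hndR']
  exact ⟨hLperm, hR'perm, hmapmap, hlen⟩

/-- gluing: the converse direction. -/
lemma glue_perm (hL : L ~ List.range p) (hR : R ~ List.range q) :
    (L ++ (p + q) :: R.map (· + p)) ~ List.range (p + q + 1) := by
  have h1 : (L ++ (p + q) :: R.map (· + p)) ~ (p + q) :: (L ++ R.map (· + p)) :=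
    perm_middle
  have h2 : List.range (p + q + 1) = List.range (p + q) ++ [p + q] := range_succ
  have h3 : List.range (p + q) = List.range p ++ (List.range q).map (p + ·) := range_add
  have h4 : R.map (· + p) ~ (List.range q).map (p + ·) := by
    have := hR.map (· + p)
    refine this.trans ?_
    rw [show List.map (· + p) (List.range q) = List.map (p + ·) (List.range q) from
      List.map_congr_left (fun x _ => by omega)]
  have h5 : L ++ R.map (· + p) ~ List.range (p + q) := by
    rw [h3]; exact (hL.append h4)
  refine h1.trans ?_
  rw [h2]
  refine Perm.trans ?_ perm_middle.symm
  simpa using (h5.cons (p + q))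
end Split


section Count
attribute [local instance] Classical.propDecidable

noncomputable def perms (n : ℕ) : Finset (List ℕ) := (List.range n).permutations.toFinset

lemma mem_perms {n : ℕ} {w : List ℕ} : w ∈ perms n ↔ w ~ List.range n := by
  simp [perms, mem_permutations]

noncomputable def cnt (P : List ℕ → Prop) (n : ℕ) : ℕ := ((perms n).filter P).card

lemma cross_of_not_occ231 {L R : List ℕ} {m : ℕ}
    (hw : (L ++ m :: R) ~ List.range (m + 1)) (h : ¬ Occ231 (L ++ m :: R)) :
    ∀ a ∈ L, ∀ b ∈ R, a < b := by
  intro a ha b hb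
  have hnd : (L ++ m :: R).Nodup := hw.nodup_iff.mpr (nodup_range)
  obtain ⟨hndL, hndMR, hdisj⟩ := nodup_append.mp hnd
  have hbd : ∀ x ∈ L ++ m :: R, x < m + 1 := fun x hx => by
    have := hw.mem_iff.mp hx; simp at this; omega
  have ham : a < m := by
    have h1 := hbd a (by simp [ha])
    have : a ≠ m := fun hc => hdisj a ha m (by simp) hc
    omega
  have hab : a ≠ b := fun hc => hdisj a ha b (by simp [hb]) hc
  by_contra hc
  push_neg at hc
  have hblt : b < a := by omega
  apply h
  refine ⟨a, m, b, ?_, hblt, ham⟩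
  have h1 : [a] <+ L := singleton_sublist.mpr ha
  have h2 : [m, b] <+ m :: R := (singleton_sublist.mpr hb).cons₂ m
  exact h1.append h2

lemma card_fiber_s18 (P PL PR : List ℕ → Prop) (p q : ℕ)
    (hP : ∀ w, P w → ¬ Occ231 w)
    (hiff : ∀ L R', L ~ List.range p → R' ~ List.range q →
      (P (L ++ (p + q) :: R'.map (· + p)) ↔ PL L ∧ PR R')) :
    ((perms (p + q + 1)).filter
        (fun w => P w ∧ (w.takeWhile (· ≠ p + q)).length = p)).card
      = cnt PL p * cnt PR q := by
  rw [cnt, cnt, ← Finset.card_product]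
  apply Finset.card_bij (fun w _ =>
    (w.takeWhile (· ≠ p + q), ((w.dropWhile (· ≠ p + q)).tail).map (· - p)))
  · -- membership
    intro w hw
    rw [Finset.mem_filter] at hw
    obtain ⟨hwp, hPw, hlen⟩ := hw
    rw [mem_perms] at hwp
    obtain ⟨L, R, rfl, hL, hR, htake, hdrop⟩ := split_at_max hwp
    have hcross := cross_of_not_occ231 hwp (hP _ hPw)
    obtain ⟨hLp, hRp, hmm, hlpq⟩ := value_split hwp hcross
    rw [htake] at hlen
    rw [htake, hdrop]
    have hq : R.length = q := by omega
    rw [Finset.mem_product, Finset.mem_filter, Finset.mem_filter]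
    rw [hlen] at hLp hRp hmm
    rw [hq] at hRp
    refine ⟨⟨mem_perms.mpr hLp, ?_⟩, mem_perms.mpr hRp, ?_⟩
    · exact ((hiff L (R.map (· - p)) hLp hRp).mp (by rw [hmm]; exact hPw)).1
    · exact ((hiff L (R.map (· - p)) hLp hRp).mp (by rw [hmm]; exact hPw)).2
  · -- injectivity
    intro w1 hw1 w2 hw2 heq
    rw [Finset.mem_filter] at hw1 hw2
    obtain ⟨hwp1, hPw1, hlen1⟩ := hw1
    obtain ⟨hwp2, hPw2, hlen2⟩ := hw2
    rw [mem_perms] at hwp1 hwp2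
    obtain ⟨L1, R1, rfl, hL1, hR1, ht1, hd1⟩ := split_at_max hwp1
    obtain ⟨L2, R2, rfl, hL2, hR2, ht2, hd2⟩ := split_at_max hwp2
    have hc1 := cross_of_not_occ231 hwp1 (hP _ hPw1)
    have hc2 := cross_of_not_occ231 hwp2 (hP _ hPw2)
    obtain ⟨-, -, hmm1, -⟩ := value_split hwp1 hc1
    obtain ⟨-, -, hmm2, -⟩ := value_split hwp2 hc2
    rw [ht1, ht2, hd1, hd2] at heq
    simp only [Prod.mk.injEq, tail_cons] at heq
    obtain ⟨hLe, hRe⟩ := heq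
    rw [ht1] at hlen1; rw [ht2] at hlen2
    rw [hLe]
    congr 1
    rw [← hmm1, ← hmm2, hlen1, hlen2, hRe]
  · -- surjectivity
    rintro ⟨L, R'⟩ hm
    rw [Finset.mem_product, Finset.mem_filter, Finset.mem_filter] at hm
    obtain ⟨⟨hLp, hPL⟩, hRp, hPR⟩ := hm
    rw [mem_perms] at hLp hRp
    have hLlt : ∀ x ∈ L, x < p := fun x hx => by
      have := hLp.mem_iff.mp hx; simp at this; omega
    refine ⟨L ++ (p + q) :: R'.map (· + p), ?_, ?_⟩
    · rw [Finset.mem_filter]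
      refine ⟨mem_perms.mpr (glue_perm hLp hRp), ?_, ?_⟩
      · exact (hiff L R' hLp hRp).mpr ⟨hPL, hPR⟩
      · rw [(takeWhile_of_append L _ (fun x hx => by have := hLlt x hx; omega)).1]
        exact hLp.length_eq.trans (by simp)
    · have h1 := takeWhile_of_append (m := p + q) L (R'.map (· + p))
        (fun x hx => by have := hLlt x hx; omega)
      rw [h1.1, h1.2]
      simp only [tail_cons, Prod.mk.injEq]
      refine ⟨trivial, ?_⟩
      rw [map_map]
      have : ∀ x ∈ R', ((· - p) ∘ (· + p)) x = id x := fun x hx => by simp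
      rw [map_congr_left this, map_id]

lemma cnt_fiberwise (P : List ℕ → Prop) (m : ℕ) :
    cnt P (m + 1) = ∑ p ∈ Finset.range (m + 1),
      ((perms (m + 1)).filter
        (fun w => P w ∧ (w.takeWhile (· ≠ m)).length = p)).card := by
  rw [cnt]
  rw [Finset.card_eq_sum_card_fiberwise
    (f := fun w => (w.takeWhile (· ≠ m)).length) (t := Finset.range (m + 1)) ?_]
  · apply Finset.sum_congr rfl
    intro p hp
    congr 1
    rw [Finset.filter_filter]
  · intro w hw
    rw [Finset.mem_coe, Finset.mem_filter] at hw
    have hwp := mem_perms.mp hw.1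
    obtain ⟨L, R, rfl, hL, hR, htake, hdrop⟩ := split_at_max hwp
    dsimp only
    rw [htake]
    have := hwp.length_eq
    simp at this
    rw [Finset.mem_coe, Finset.mem_range]
    omega

end Count

section Rec
attribute [local instance] Classical.propDecidable

lemma not_occ231_nil : ¬ Occ231 [] := by
  rintro ⟨a, b, c, hs, -, -⟩
  have := hs.length_le; simp at this

lemma not_occ231_single (x : ℕ) : ¬ Occ231 [x] := by
  rintro ⟨a, b, c, hs, -, -⟩
  have := hs.length_le; simp at this

lemma not_occA_nil : ¬ OccA [] := by
  rintro ⟨u, v, a, b, he, -, -⟩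
  apply_fun List.length at he; simp at he

lemma not_occA_single (x : ℕ) : ¬ OccA [x] := by
  rintro ⟨u, v, a, b, he, -, -⟩
  apply_fun List.length at he; simp at he; omega

lemma not_occB_nil : ¬ OccB [] := by
  rintro ⟨u, v, a, b, he, -, -⟩
  apply_fun List.length at he; simp at he

lemma not_occB_single (x : ℕ) : ¬ OccB [x] := by
  rintro ⟨u, v, a, b, he, -, -⟩
  apply_fun List.length at he; simp at he; omega

lemma not_hm_nil : ¬ HM [] := by
  rintro ⟨a, t, he, -⟩
  simp at he

lemma perms_zero : perms 0 = {[]} := by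
  ext w; simp [mem_perms]

lemma perms_one : perms 1 = {[0]} := by
  have h : List.range 1 = [0] := by simp [List.range_succ]
  ext w
  rw [mem_perms, Finset.mem_singleton, h]
  simp

lemma cnt_goodA_zero : cnt GoodA 0 = 1 := by
  rw [cnt, perms_zero, Finset.filter_singleton, if_pos ⟨not_occ231_nil, not_occA_nil⟩]
  rfl

lemma cnt_goodA_one : cnt GoodA 1 = 1 := by
  rw [cnt, perms_one, Finset.filter_singleton, if_pos ⟨not_occ231_single 0, not_occA_single 0⟩]
  rfl

lemma cnt_goodB_zero : cnt GoodB 0 = 1 := by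
  rw [cnt, perms_zero, Finset.filter_singleton, if_pos ⟨not_occ231_nil, not_occB_nil⟩]
  rfl

lemma cnt_goodB_one : cnt GoodB 1 = 1 := by
  rw [cnt, perms_one, Finset.filter_singleton, if_pos ⟨not_occ231_single 0, not_occB_single 0⟩]
  rfl

lemma cnt_goodC_zero : cnt GoodC 0 = 1 := by
  rw [cnt, perms_zero, Finset.filter_singleton,
    if_pos ⟨⟨not_occ231_nil, not_occB_nil⟩, not_hm_nil⟩]
  rfl

lemma hiffA {p q : ℕ} (hq : q ≠ 0) :
    ∀ L R', L ~ List.range p → R' ~ List.range q →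
      (GoodA (L ++ (p + q) :: R'.map (· + p)) ↔ GoodA L ∧ GoodA R') := by
  intro L R' hLp hRp
  have hL : ∀ x ∈ L, x < p + q := fun x hx => by
    have := hLp.mem_iff.mp hx; simp at this; omega
  have hR : ∀ x ∈ R'.map (· + p), x < p + q := fun x hx => by
    simp only [List.mem_map] at hx
    obtain ⟨y, hy, rfl⟩ := hx
    have := hRp.mem_iff.mp hy; simp at this; omega
  have hLR : ∀ a ∈ L, ∀ b ∈ R'.map (· + p), a < b := fun a ha b hb => by
    have h1 := hLp.mem_iff.mp ha
    simp only [List.mem_map] at hb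
    obtain ⟨y, hy, rfl⟩ := hb
    simp at h1; omega
  have hRne : R'.map (· + p) ≠ [] := by
    have h1 : R'.length = q := by simpa using hRp.length_eq
    intro hc
    rw [List.map_eq_nil_iff] at hc
    rw [hc] at h1
    simp at h1; omega
  have e1 := occ231_decomp hL hR hLR
  have e2 := occA_decomp hL hR hLR
  have e3 := goodA_map_add (p := p) (w := R')
  unfold GoodA at *
  constructor
  · rintro ⟨h1, h2⟩
    rw [e1] at h1; rw [e2] at h2
    push_neg at h1 h2
    exact ⟨⟨h1.1, h2.1⟩, e3.mp ⟨h1.2, h2.2.1⟩⟩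
  · rintro ⟨⟨h1, h2⟩, h3⟩
    have h4 := e3.mpr h3
    rw [e1, e2]
    push_neg
    exact ⟨⟨h1, h4.1⟩, h2, h4.2, fun _ => hRne⟩

lemma hiffB {p q : ℕ} :
    ∀ L R', L ~ List.range p → R' ~ List.range q →
      (GoodB (L ++ (p + q) :: R'.map (· + p)) ↔ GoodB L ∧ GoodC R') := by
  intro L R' hLp hRp
  have hL : ∀ x ∈ L, x < p + q := fun x hx => by
    have := hLp.mem_iff.mp hx; simp at this; omega
  have hR : ∀ x ∈ R'.map (· + p), x < p + q := fun x hx => by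
    simp only [List.mem_map] at hx
    obtain ⟨y, hy, rfl⟩ := hx
    have := hRp.mem_iff.mp hy; simp at this; omega
  have hLR : ∀ a ∈ L, ∀ b ∈ R'.map (· + p), a < b := fun a ha b hb => by
    have h1 := hLp.mem_iff.mp ha
    simp only [List.mem_map] at hb
    obtain ⟨y, hy, rfl⟩ := hb
    simp at h1; omega
  have hnd : (R'.map (· + p)).Nodup := by
    have : R'.Nodup := hRp.nodup_iff.mpr (List.nodup_range)
    exact this.map (fun a b h => by omega)
  have e1 := occ231_decomp hL hR hLR
  have e2 := occB_decomp hL hR hLR hnd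
  have e3 := goodB_map_add (p := p) (w := R')
  have e4 := hm_map_add (p := p) (w := R')
  unfold GoodB GoodC at *
  constructor
  · rintro ⟨h1, h2⟩
    rw [e1] at h1; rw [e2] at h2
    push_neg at h1 h2
    exact ⟨⟨h1.1, h2.1⟩, e3.mp ⟨h1.2, h2.2.1⟩, fun hc => h2.2.2 (e4.mpr hc)⟩
  · rintro ⟨⟨h1, h2⟩, h3, h4⟩
    have h5 := e3.mpr h3
    rw [e1, e2]
    push_neg
    exact ⟨⟨h1, h5.1⟩, h2, h5.2, fun hc => h4 (e4.mp hc)⟩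

lemma fiberA_top {m : ℕ} (hm : 1 ≤ m) :
    ((perms (m + 1)).filter
      (fun w => GoodA w ∧ (w.takeWhile (· ≠ m)).length = m)).card = 0 := by
  rw [Finset.card_eq_zero, Finset.filter_eq_empty_iff]
  intro w hw
  rintro ⟨hG, hlen⟩
  have hwp := mem_perms.mp hw
  obtain ⟨L, R, rfl, hL, hR, htake, hdrop⟩ := split_at_max hwp
  rw [htake] at hlen
  have hlw := hwp.length_eq
  simp at hlw
  have hRnil : R = [] := by
    have : R.length = 0 := by omega
    exact List.length_eq_zero_iff.mp this
  have hLne : L ≠ [] := by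
    intro hc
    rw [hc] at hlen
    simp at hlen
    omega
  have hcross := cross_of_not_occ231 hwp hG.1
  exact hG.2 ((occA_decomp hL hR hcross).mpr (Or.inr (Or.inr ⟨hLne, hRnil⟩)))

lemma cntA_rec (k : ℕ) :
    cnt GoodA (k + 2) = ∑ p ∈ Finset.range (k + 1), cnt GoodA p * cnt GoodA (k + 1 - p) := by
  have h0 := cnt_fiberwise GoodA (k + 1)
  rw [Finset.sum_range_succ] at h0
  rw [fiberA_top (by omega)] at h0
  rw [show k + 1 + 1 = k + 2 from rfl] at h0
  rw [h0, add_zero]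
  apply Finset.sum_congr rfl
  intro p hp
  rw [Finset.mem_range] at hp
  have h := card_fiber_s18 GoodA GoodA GoodA p (k + 1 - p) (fun w hw => hw.1)
    (hiffA (by omega))
  rw [show p + (k + 1 - p) = k + 1 from by omega] at h
  exact h

lemma cntB_rec (m : ℕ) :
    cnt GoodB (m + 1) = ∑ p ∈ Finset.range (m + 1), cnt GoodB p * cnt GoodC (m - p) := by
  rw [cnt_fiberwise GoodB m]
  apply Finset.sum_congr rfl
  intro p hp
  rw [Finset.mem_range] at hp
  have h := card_fiber_s18 GoodB GoodB GoodC p (m - p) (fun w hw => hw.1) hiffB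
  rw [show p + (m - p) = m from by omega] at h
  exact h

lemma cons_max_perm {m : ℕ} {t : List ℕ} :
    (m :: t) ~ List.range (m + 1) ↔ t ~ List.range m := by
  have h1 : List.range (m + 1) ~ m :: List.range m := by
    rw [List.range_succ]
    exact List.perm_append_singleton _ _
  constructor
  · intro h
    exact (List.perm_cons m).mp (h.trans h1)
  · intro h
    exact (h.cons m).trans h1.symm

lemma goodB_cons_max {m : ℕ} {t : List ℕ} (ht : t ~ List.range m) :
    GoodB (m :: t) ↔ GoodC t := by
  have hR : ∀ x ∈ t, x < m := fun x hx => by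
    have := ht.mem_iff.mp hx; simp at this; omega
  have hL : ∀ x ∈ ([] : List ℕ), x < m := by simp
  have hLR : ∀ a ∈ ([] : List ℕ), ∀ b ∈ t, a < b := by simp
  have hnd : t.Nodup := ht.nodup_iff.mpr (List.nodup_range)
  have e1 := occ231_decomp hL hR hLR
  have e2 := occB_decomp hL hR hLR hnd
  simp only [List.nil_append] at e1 e2
  unfold GoodB GoodC GoodB
  rw [e1, e2]
  have h1 := not_occ231_nil
  have h2 := not_occB_nil
  tauto

lemma hm_head_eq {m : ℕ} {w : List ℕ} (hwp : w ~ List.range (m + 1)) (hHM : HM w) :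
    ∃ t, w = m :: t ∧ t ~ List.range m := by
  obtain ⟨a, t, rfl, hmax⟩ := hHM
  have ha : a = m := by
    have hbd : a < m + 1 := by
      have := hwp.mem_iff.mp (show a ∈ a :: t by simp); simp at this; omega
    have hmem : m ∈ a :: t := hwp.mem_iff.mpr (by simp)
    simp only [List.mem_cons] at hmem
    rcases hmem with h | h
    · omega
    · have := hmax m h; omega
  subst ha
  exact ⟨t, rfl, cons_max_perm.mp hwp⟩

lemma card_goodB_hm (m : ℕ) :
    ((perms (m + 1)).filter (fun w => GoodB w ∧ HM w)).card = cnt GoodC m := by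
  rw [cnt]
  apply Finset.card_bij (fun w _ => w.tail)
  · intro w hw
    rw [Finset.mem_filter] at hw ⊢
    obtain ⟨hwp, hG, hHM⟩ := hw
    obtain ⟨t, rfl, ht⟩ := hm_head_eq (mem_perms.mp hwp) hHM
    refine ⟨mem_perms.mpr ht, ?_⟩
    simpa using (goodB_cons_max ht).mp hG
  · intro w1 hw1 w2 hw2 heq
    rw [Finset.mem_filter] at hw1 hw2
    obtain ⟨t1, rfl, -⟩ := hm_head_eq (mem_perms.mp hw1.1) hw1.2.2
    obtain ⟨t2, rfl, -⟩ := hm_head_eq (mem_perms.mp hw2.1) hw2.2.2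
    simpa using heq
  · intro t ht
    rw [Finset.mem_filter] at ht
    obtain ⟨htp, hC⟩ := ht
    rw [mem_perms] at htp
    refine ⟨m :: t, ?_, by simp⟩
    rw [Finset.mem_filter]
    refine ⟨mem_perms.mpr (cons_max_perm.mpr htp), (goodB_cons_max htp).mpr hC, ?_⟩
    exact ⟨m, t, rfl, fun x hx => by
      have := htp.mem_iff.mp hx; simp at this; omega⟩

lemma cntB_split (m : ℕ) :
    cnt GoodB (m + 1) = cnt GoodC (m + 1) + cnt GoodC m := by
  have hsplit := Finset.card_filter_add_card_filter_not
    (s := (perms (m + 1)).filter GoodB) (p := HM)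
  have h1 : ((perms (m + 1)).filter GoodB).filter HM
      = (perms (m + 1)).filter (fun w => GoodB w ∧ HM w) := by
    rw [Finset.filter_filter]
  have h2 : ((perms (m + 1)).filter GoodB).filter (fun w => ¬ HM w)
      = (perms (m + 1)).filter GoodC := by
    rw [Finset.filter_filter]
    apply Finset.filter_congr
    intro w _
    unfold GoodC
    tauto
  rw [h1, h2, card_goodB_hm] at hsplit
  rw [cnt, cnt]
  omega

lemma main_cnt : ∀ n, cnt GoodA n = cnt GoodB n := by
  intro n
  induction n using Nat.strong_induction_on with
  | _ n ih =>
    match n with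
    | 0 => rw [cnt_goodA_zero, cnt_goodB_zero]
    | 1 => rw [cnt_goodA_one, cnt_goodB_one]
    | (k + 2) =>
      have hA : cnt GoodA (k + 2) + cnt GoodA (k + 1)
          = ∑ p ∈ Finset.range (k + 2), cnt GoodA p * cnt GoodA (k + 1 - p) := by
        rw [cntA_rec k, Finset.sum_range_succ (n := k + 1)]
        rw [show k + 1 - (k + 1) = 0 from by omega, cnt_goodA_zero, mul_one]
      have hB : cnt GoodB (k + 2) + cnt GoodB (k + 1)
          = ∑ p ∈ Finset.range (k + 2), cnt GoodB p * cnt GoodB (k + 1 - p) := by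
        rw [cntB_rec (k + 1), cntB_rec k, Finset.sum_range_succ (n := k + 1)]
        rw [show k + 1 - (k + 1) = 0 from by omega, cnt_goodC_zero, mul_one]
        rw [Finset.sum_range_succ (n := k + 1)]
        rw [show k + 1 - (k + 1) = 0 from by omega, cnt_goodB_zero, mul_one]
        have hcomb : ∑ p ∈ Finset.range (k + 1), cnt GoodB p * cnt GoodC (k + 1 - p)
            + ∑ p ∈ Finset.range (k + 1), cnt GoodB p * cnt GoodC (k - p)
            = ∑ p ∈ Finset.range (k + 1), cnt GoodB p * cnt GoodB (k + 1 - p) := by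
          rw [← Finset.sum_add_distrib]
          apply Finset.sum_congr rfl
          intro p hp
          rw [Finset.mem_range] at hp
          rw [← mul_add]
          congr 1
          rw [show k + 1 - p = (k - p) + 1 from by omega, cntB_split (k - p)]
        omega
      have hsum : ∑ p ∈ Finset.range (k + 2), cnt GoodA p * cnt GoodA (k + 1 - p)
          = ∑ p ∈ Finset.range (k + 2), cnt GoodB p * cnt GoodB (k + 1 - p) := by
        apply Finset.sum_congr rfl
        intro p hp
        rw [Finset.mem_range] at hp
        rw [ih p (by omega), ih (k + 1 - p) (by omega)]
      have hk1 := ih (k + 1) (by omega)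
      omega

end Rec

section Mesh
variable {n : ℕ} (π : Equiv.Perm (Fin n))

lemma extFun0 (α : Fin 2 → Fin n) : extFun α 0 = 0 := rfl
lemma extFun1 (α : Fin 2 → Fin n) : extFun α 1 = (α 0 : ℕ) + 1 := rfl
lemma extFun2 (α : Fin 2 → Fin n) : extFun α 2 = (α 1 : ℕ) + 1 := rfl
lemma extFun3 (α : Fin 2 → Fin n) : extFun α 3 = n + 1 := rfl

lemma strictMono_fin2 {f : Fin 2 → Fin n} (h : f 0 < f 1) : StrictMono f := by
  intro a b hab
  fin_cases a <;> fin_cases b <;> simp_all <;> exact absurd hab (by simp)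

def SimpleA : Prop :=
  ∃ i j : Fin n, (i : ℕ) + 1 = (j : ℕ) ∧ (π i : ℕ) < (π j : ℕ) ∧
    ∀ x : Fin n, (j : ℕ) < (x : ℕ) → (π j : ℕ) < (π x : ℕ)

def SimpleB : Prop :=
  ∃ i j : Fin n, (i : ℕ) + 1 = (j : ℕ) ∧ (π j : ℕ) + 1 = (π i : ℕ)

lemma mesh1_iff :
    ContainsMesh (1 : Equiv.Perm (Fin 2))
      ({(1,0),(1,1),(1,2),(2,0),(2,1)} : Finset (ℕ × ℕ)) π ↔ SimpleA π := by
  constructor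
  · rintro ⟨α, β, hα, hβ, hcomm, hreg⟩
    have hc0 : π (α 0) = β 0 := hcomm 0
    have hc1 : π (α 1) = β 1 := hcomm 1
    have hα01 : (α 0 : ℕ) < (α 1 : ℕ) := hα (show (0 : Fin 2) < 1 by decide)
    have hβ01 : (β 0 : ℕ) < (β 1 : ℕ) := hβ (show (0 : Fin 2) < 1 by decide)
    have h10 := fun x => hreg (1,0) (by simp) x
    have h11 := fun x => hreg (1,1) (by simp) x
    have h12 := fun x => hreg (1,2) (by simp) x
    have h20 := fun x => hreg (2,0) (by simp) x
    have h21 := fun x => hreg (2,1) (by simp) x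
    simp only [show (0:ℕ)+1 = 1 from rfl, show (1:ℕ)+1 = 2 from rfl, show (2:ℕ)+1 = 3 from rfl,
      extFun0, extFun1, extFun2, extFun3] at h10 h11 h12 h20 h21
    -- no point strictly between α 0 and α 1 (in any row)
    have hmid : ∀ x : Fin n, ¬((α 0 : ℕ) < (x : ℕ) ∧ (x : ℕ) < (α 1 : ℕ)) := by
      rintro x ⟨hx1, hx2⟩
      have hne0 : (π x : ℕ) ≠ (β 0 : ℕ) := by
        intro hc
        have : π x = β 0 := Fin.ext hc
        rw [← hc0] at this
        have := π.injective this
        subst this; omega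
      have hne1 : (π x : ℕ) ≠ (β 1 : ℕ) := by
        intro hc
        have : π x = β 1 := Fin.ext hc
        rw [← hc1] at this
        have := π.injective this
        subst this; omega
      have hxn : (π x : ℕ) < n := (π x).isLt
      rcases show (π x : ℕ) < (β 0 : ℕ) ∨ ((β 0 : ℕ) < (π x : ℕ) ∧ (π x : ℕ) < (β 1 : ℕ))
          ∨ (β 1 : ℕ) < (π x : ℕ) from by omega with h | h | h
      · exact h10 x ⟨by omega, by omega, by omega, by omega⟩
      · exact h11 x ⟨by omega, by omega, by omega, by omega⟩
      · exact h12 x ⟨by omega, by omega, by omega, by omega⟩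
    have hadj : (α 0 : ℕ) + 1 = (α 1 : ℕ) := by
      by_contra hc
      have hlt : (α 0 : ℕ) + 1 < (α 1 : ℕ) := by omega
      have hx : ((α 0 : ℕ) + 1) < n := by have := (α 1).isLt; omega
      exact hmid ⟨(α 0 : ℕ) + 1, hx⟩ ⟨by simp, by simpa using hlt⟩
    refine ⟨α 0, α 1, hadj, by rw [hc0, hc1]; omega, ?_⟩
    intro x hx
    rw [hc1]
    by_contra hc
    push_neg at hc
    have hne0 : (π x : ℕ) ≠ (β 0 : ℕ) := by
      intro hce
      have : π x = β 0 := Fin.ext hce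
      rw [← hc0] at this
      have := π.injective this
      subst this; omega
    have hne1 : (π x : ℕ) ≠ (β 1 : ℕ) := by
      intro hce
      have : π x = β 1 := Fin.ext hce
      rw [← hc1] at this
      have := π.injective this
      subst this; omega
    have hxn : (x : ℕ) < n := x.isLt
    rcases show (π x : ℕ) < (β 0 : ℕ) ∨ ((β 0 : ℕ) < (π x : ℕ) ∧ (π x : ℕ) < (β 1 : ℕ))
        from by omega with h | h
    · exact h20 x ⟨by omega, by omega, by omega, by omega⟩
    · exact h21 x ⟨by omega, by omega, by omega, by omega⟩
  · rintro ⟨i, j, hij, hval, hafter⟩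
    refine ⟨![i, j], ![π i, π j], ?_, ?_, ?_, ?_⟩
    · apply strictMono_fin2
      simp only [Matrix.cons_val_zero, Matrix.cons_val_one, Matrix.head_cons]
      rw [Fin.lt_def]; omega
    · apply strictMono_fin2
      simp only [Matrix.cons_val_zero, Matrix.cons_val_one, Matrix.head_cons]
      rw [Fin.lt_def]; omega
    · intro t
      fin_cases t <;> simp
    · intro p hp x
      simp only [Finset.mem_insert, Finset.mem_singleton] at hp
      have e1 : extFun ![i, j] 1 = (i : ℕ) + 1 := by
        rw [extFun1]; simp
      have e2 : extFun ![i, j] 2 = (j : ℕ) + 1 := by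
        rw [extFun2]; simp
      have e3 : extFun ![i, j] 3 = n + 1 := extFun3 _
      have f1 : extFun ![π i, π j] 1 = (π i : ℕ) + 1 := by
        rw [extFun1]; simp
      have f2 : extFun ![π i, π j] 2 = (π j : ℕ) + 1 := by
        rw [extFun2]; simp
      have f0 : extFun ![π i, π j] 0 = 0 := rfl
      rcases hp with rfl | rfl | rfl | rfl | rfl
      · simp only [e1, e2]; rintro ⟨hx1, hx2, -, -⟩; omega
      · simp only [e1, e2]; rintro ⟨hx1, hx2, -, -⟩; omega
      · simp only [e1, e2]; rintro ⟨hx1, hx2, -, -⟩; omega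
      · simp only [e2, e3, f0, f1]
        rintro ⟨hx1, hx2, hx3, hx4⟩
        have := hafter x (by omega)
        omega
      · simp only [e2, e3, f1, f2]
        rintro ⟨hx1, hx2, hx3, hx4⟩
        have := hafter x (by omega)
        omega

lemma mesh2_iff :
    ContainsMesh (Equiv.swap 0 1 : Equiv.Perm (Fin 2))
      ({(0,1),(1,0),(1,1),(1,2),(2,1)} : Finset (ℕ × ℕ)) π ↔ SimpleB π := by
  constructor
  · rintro ⟨α, β, hα, hβ, hcomm, hreg⟩
    have hc0 : π (α 0) = β 1 := by
      have := hcomm 0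
      rwa [Equiv.swap_apply_left] at this
    have hc1 : π (α 1) = β 0 := by
      have := hcomm 1
      rwa [Equiv.swap_apply_right] at this
    have hα01 : (α 0 : ℕ) < (α 1 : ℕ) := hα (show (0 : Fin 2) < 1 by decide)
    have hβ01 : (β 0 : ℕ) < (β 1 : ℕ) := hβ (show (0 : Fin 2) < 1 by decide)
    have h01 := fun x => hreg (0,1) (by simp) x
    have h10 := fun x => hreg (1,0) (by simp) x
    have h11 := fun x => hreg (1,1) (by simp) x
    have h12 := fun x => hreg (1,2) (by simp) x
    have h21 := fun x => hreg (2,1) (by simp) x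
    simp only [show (0:ℕ)+1 = 1 from rfl, show (1:ℕ)+1 = 2 from rfl, show (2:ℕ)+1 = 3 from rfl,
      extFun0, extFun1, extFun2, extFun3] at h01 h10 h11 h12 h21
    have hne : ∀ x : Fin n, x ≠ α 0 → x ≠ α 1 →
        (π x : ℕ) ≠ (β 0 : ℕ) ∧ (π x : ℕ) ≠ (β 1 : ℕ) := by
      intro x hx0 hx1
      constructor
      · intro hc
        have h : π x = β 0 := Fin.ext hc
        rw [← hc1] at h
        exact hx1 (π.injective h)
      · intro hc
        have h : π x = β 1 := Fin.ext hc
        rw [← hc0] at h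
        exact hx0 (π.injective h)
    have hadj : (α 0 : ℕ) + 1 = (α 1 : ℕ) := by
      by_contra hc
      have hlt : (α 0 : ℕ) + 1 < (α 1 : ℕ) := by omega
      have hxlt : ((α 0 : ℕ) + 1) < n := by have := (α 1).isLt; omega
      set x : Fin n := ⟨(α 0 : ℕ) + 1, hxlt⟩ with hxdef
      have hx0 : x ≠ α 0 := by
        intro h; apply_fun (Fin.val) at h; simp [hxdef] at h
      have hx1 : x ≠ α 1 := by
        intro h; apply_fun (Fin.val) at h; simp [hxdef] at h; omega
      obtain ⟨hne0, hne1⟩ := hne x hx0 hx1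
      have hxv : (x : ℕ) = (α 0 : ℕ) + 1 := rfl
      have hxn : (π x : ℕ) < n := (π x).isLt
      rcases show (π x : ℕ) < (β 0 : ℕ) ∨ ((β 0 : ℕ) < (π x : ℕ) ∧ (π x : ℕ) < (β 1 : ℕ))
          ∨ (β 1 : ℕ) < (π x : ℕ) from by omega with h | h | h
      · exact h10 x ⟨by omega, by omega, by omega, by omega⟩
      · exact h11 x ⟨by omega, by omega, by omega, by omega⟩
      · exact h12 x ⟨by omega, by omega, by omega, by omega⟩
    -- no value strictly between β 0 and β 1
    have hvadj : (β 0 : ℕ) + 1 = (β 1 : ℕ) := by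
      by_contra hc
      have hlt : (β 0 : ℕ) + 1 < (β 1 : ℕ) := by omega
      have hvlt : ((β 0 : ℕ) + 1) < n := by have := (β 1).isLt; omega
      set x : Fin n := π.symm ⟨(β 0 : ℕ) + 1, hvlt⟩ with hxdef
      have hpx : (π x : ℕ) = (β 0 : ℕ) + 1 := by
        rw [hxdef]; simp
      have hx0 : x ≠ α 0 := by
        intro h
        rw [h, hc0] at hpx
        omega
      have hx1 : x ≠ α 1 := by
        intro h
        rw [h, hc1] at hpx
        omega
      have hxa0 : (x : ℕ) ≠ (α 0 : ℕ) := fun h => hx0 (Fin.ext h)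
      have hxa1 : (x : ℕ) ≠ (α 1 : ℕ) := fun h => hx1 (Fin.ext h)
      have hxn : (x : ℕ) < n := x.isLt
      rcases show (x : ℕ) < (α 0 : ℕ) ∨ ((α 0 : ℕ) < (x : ℕ) ∧ (x : ℕ) < (α 1 : ℕ))
          ∨ (α 1 : ℕ) < (x : ℕ) from by omega with h | h | h
      · exact h01 x ⟨by omega, by omega, by omega, by omega⟩
      · exact h11 x ⟨by omega, by omega, by omega, by omega⟩
      · exact h21 x ⟨by omega, by omega, by omega, by omega⟩
    refine ⟨α 0, α 1, hadj, ?_⟩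
    rw [hc0, hc1]
    omega
  · rintro ⟨i, j, hij, hval⟩
    refine ⟨![i, j], ![π j, π i], ?_, ?_, ?_, ?_⟩
    · apply strictMono_fin2
      simp only [Matrix.cons_val_zero, Matrix.cons_val_one, Matrix.head_cons]
      rw [Fin.lt_def]; omega
    · apply strictMono_fin2
      simp only [Matrix.cons_val_zero, Matrix.cons_val_one, Matrix.head_cons]
      rw [Fin.lt_def]; omega
    · intro t
      fin_cases t
      · simp [Equiv.swap_apply_left]
      · simp [Equiv.swap_apply_right]
    · intro p hp x
      simp only [Finset.mem_insert, Finset.mem_singleton] at hp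
      have e1 : extFun ![i, j] 1 = (i : ℕ) + 1 := by rw [extFun1]; simp
      have e2 : extFun ![i, j] 2 = (j : ℕ) + 1 := by rw [extFun2]; simp
      have f1 : extFun ![π j, π i] 1 = (π j : ℕ) + 1 := by rw [extFun1]; simp
      have f2 : extFun ![π j, π i] 2 = (π i : ℕ) + 1 := by rw [extFun2]; simp
      rcases hp with rfl | rfl | rfl | rfl | rfl
      · simp only [show (0:ℕ)+1 = 1 from rfl, show (1:ℕ)+1 = 2 from rfl, f1, f2]
        rintro ⟨-, -, hx3, hx4⟩; omega
      · simp only [show (1:ℕ)+1 = 2 from rfl, e1, e2]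
        rintro ⟨hx1, hx2, -, -⟩; omega
      · simp only [show (1:ℕ)+1 = 2 from rfl, e1, e2]
        rintro ⟨hx1, hx2, -, -⟩; omega
      · simp only [show (1:ℕ)+1 = 2 from rfl, e1, e2]
        rintro ⟨hx1, hx2, -, -⟩; omega
      · simp only [show (1:ℕ)+1 = 2 from rfl, show (2:ℕ)+1 = 3 from rfl, f1, f2]
        rintro ⟨-, -, hx3, hx4⟩; omega

end Mesh
section Transfer
variable {n : ℕ} (π : Equiv.Perm (Fin n))

/-- the word of a permutation -/
def wordOf : List ℕ := List.ofFn (fun i : Fin n => (π i : ℕ))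

lemma wordOf_length : (wordOf π).length = n := by simp [wordOf]

lemma wordOf_getElem (i : ℕ) (h : i < (wordOf π).length) :
    (wordOf π)[i] = (π ⟨i, by simpa [wordOf] using h⟩ : ℕ) := by
  simp [wordOf]

lemma wordOf_perm : wordOf π ~ List.range n := by
  apply List.perm_of_nodup_nodup_toFinset_eq
  · rw [wordOf, List.nodup_ofFn]
    intro a b hab
    exact π.injective (Fin.val_injective hab)
  · exact List.nodup_range
  · ext v
    simp only [List.mem_toFinset, List.mem_range, wordOf, List.mem_ofFn]
    constructor
    · rintro ⟨i, rfl⟩; exact (π i).isLt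
    · intro hv
      exact ⟨π.symm ⟨v, hv⟩, by simp⟩

lemma wordOf_split {i : ℕ} (h : i + 1 < n) :
    wordOf π = ((wordOf π).take i ++ [(π ⟨i, by omega⟩ : ℕ), (π ⟨i+1, h⟩ : ℕ)])
      ++ (wordOf π).drop (i + 2) := by
  have hlen : (wordOf π).length = n := wordOf_length π
  have h1 : (wordOf π).drop i = (wordOf π)[i] :: (wordOf π).drop (i+1) :=
    List.drop_eq_getElem_cons (by omega)
  have h2 : (wordOf π).drop (i+1) = (wordOf π)[i+1] :: (wordOf π).drop (i+2) :=
    List.drop_eq_getElem_cons (by omega)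
  have h3 := List.take_append_drop i (wordOf π)
  rw [wordOf_getElem π i (by omega)] at h1
  rw [wordOf_getElem π (i+1) (by omega)] at h2
  conv_lhs => rw [← h3]
  rw [h1, h2]
  simp

lemma occA_iff_simpleA : OccA (wordOf π) ↔ SimpleA π := by
  constructor
  · rintro ⟨u, v, a, b, he, h1, h2⟩
    have hlen : (wordOf π).length = n := wordOf_length π
    have hlen2 : u.length + 2 + v.length = n := by
      apply_fun List.length at he
      simp at he
      omega
    set i := u.length with hidef
    have hi1 : i + 1 < n := by omega
    have he' : wordOf π = (u ++ [a, b]) ++ v := by rw [he]; simp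
    have ha : a = (π ⟨i, by omega⟩ : ℕ) := by
      have h0 : (wordOf π)[i]'(by omega) = a := by
        simp only [he]
        rw [List.getElem_append_right (by omega)]
        simp [hidef]
      rw [← h0]
      simp only [wordOf, List.getElem_ofFn]
    have hb : b = (π ⟨i + 1, hi1⟩ : ℕ) := by
      have h0 : (wordOf π)[i+1]'(by omega) = b := by
        simp only [he]
        rw [List.getElem_append_right (by omega)]
        simp [hidef, show i + 1 - i = 1 from by omega]
      rw [← h0]
      simp only [wordOf, List.getElem_ofFn]
    refine ⟨⟨i, by omega⟩, ⟨i+1, hi1⟩, rfl, by rw [← ha, ← hb]; exact h1, ?_⟩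
    intro x hx
    have hx' : i + 1 < (x : ℕ) := hx
    have hxv : (π x : ℕ) ∈ v := by
      have hxw : (wordOf π)[(x : ℕ)]'(by omega) = (π x : ℕ) := by
        simp only [wordOf, List.getElem_ofFn]
      simp only [he'] at hxw
      rw [List.getElem_append_right (by simp; omega)] at hxw
      rw [← hxw]
      exact List.getElem_mem _
    have hfin := h2 _ hxv
    exact hb ▸ hfin
  · rintro ⟨i, j, hij, hval, hafter⟩
    have hi1 : (i : ℕ) + 1 < n := by have := j.isLt; omega
    have hlen : (wordOf π).length = n := wordOf_length π
    refine ⟨(wordOf π).take i, (wordOf π).drop ((i : ℕ) + 2), (π i : ℕ),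
      (π ⟨(i : ℕ) + 1, hi1⟩ : ℕ), ?_, ?_, ?_⟩
    · have := wordOf_split π hi1
      simpa using this
    · have hj : j = ⟨(i : ℕ) + 1, hi1⟩ := Fin.ext hij.symm
      rw [← hj]; exact hval
    · intro x hx
      rw [List.mem_iff_getElem] at hx
      obtain ⟨k, hk, hkx⟩ := hx
      rw [List.getElem_drop] at hkx
      have hik : (i : ℕ) + 2 + k < n := by
        have := hk; simp [hlen] at this; omega
      have hget : (wordOf π)[(i : ℕ) + 2 + k]'(by omega) = (π ⟨(i : ℕ) + 2 + k, hik⟩ : ℕ) := by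
        simp only [wordOf, List.getElem_ofFn]
      rw [hget] at hkx
      have hj : j = ⟨(i : ℕ) + 1, hi1⟩ := Fin.ext hij.symm
      rw [← hkx, ← hj]
      apply hafter ⟨(i : ℕ) + 2 + k, hik⟩
      rw [hj]
      show (i : ℕ) + 1 < (i : ℕ) + 2 + k
      omega

lemma occB_iff_simpleB : OccB (wordOf π) ↔ SimpleB π := by
  constructor
  · rintro ⟨u, v, a, b, he, h1, h2⟩
    have hlen : (wordOf π).length = n := wordOf_length π
    have hlen2 : u.length + 2 + v.length = n := by
      apply_fun List.length at he
      simp at he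
      omega
    set i := u.length with hidef
    have hi1 : i + 1 < n := by omega
    have ha : a = (π ⟨i, by omega⟩ : ℕ) := by
      have h0 : (wordOf π)[i]'(by omega) = a := by
        simp only [he]
        rw [List.getElem_append_right (by omega)]
        simp [hidef]
      rw [← h0]
      simp only [wordOf, List.getElem_ofFn]
    have hb : b = (π ⟨i + 1, hi1⟩ : ℕ) := by
      have h0 : (wordOf π)[i+1]'(by omega) = b := by
        simp only [he]
        rw [List.getElem_append_right (by omega)]
        simp [hidef, show i + 1 - i = 1 from by omega]
      rw [← h0]
      simp only [wordOf, List.getElem_ofFn]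
    refine ⟨⟨i, by omega⟩, ⟨i+1, hi1⟩, rfl, ?_⟩
    rw [← ha, ← hb]
    -- show b + 1 = a
    by_contra hc
    have hblt : b + 1 < a := by omega
    have han : a < n := by
      rw [ha]; exact (π _).isLt
    have hmem : b + 1 ∈ wordOf π := (wordOf_perm π).mem_iff.mpr (by simp; omega)
    exact h2 _ hmem ⟨by omega, by omega⟩
  · rintro ⟨i, j, hij, hval⟩
    have hi1 : (i : ℕ) + 1 < n := by have := j.isLt; omega
    refine ⟨(wordOf π).take i, (wordOf π).drop ((i : ℕ) + 2), (π i : ℕ),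
      (π ⟨(i : ℕ) + 1, hi1⟩ : ℕ), ?_, ?_, ?_⟩
    · have := wordOf_split π hi1
      simpa using this
    · have hj : j = ⟨(i : ℕ) + 1, hi1⟩ := Fin.ext hij.symm
      rw [← hj]; omega
    · intro x hx
      have hj : j = ⟨(i : ℕ) + 1, hi1⟩ := Fin.ext hij.symm
      rw [← hj]
      omega

lemma occ231_iff : Occ231 (wordOf π) ↔ ¬ Avoids231 π := by
  rw [Avoids231]
  rw [not_not]
  constructor
  · rintro ⟨a, b, c, hs, h1, h2⟩
    obtain ⟨is, habc, hpw⟩ := List.sublist_eq_map_getElem hs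
    match is, habc with
    | [i1, i2, i3], habc =>
      simp only [List.map_cons, List.map_nil, List.cons.injEq, and_true, Fin.getElem_fin] at habc
      obtain ⟨ha, hb, hc⟩ := habc
      rw [List.pairwise_cons, List.pairwise_cons] at hpw
      have h12 : (i1 : ℕ) < (i2 : ℕ) := hpw.1 i2 (by simp)
      have h13 : (i1 : ℕ) < (i3 : ℕ) := hpw.1 i3 (by simp)
      have h23 : (i2 : ℕ) < (i3 : ℕ) := hpw.2.1 i3 (by simp)
      have hlen : (wordOf π).length = n := wordOf_length π
      have hget : ∀ t : Fin (wordOf π).length, (wordOf π)[(t : ℕ)] = (π ⟨(t : ℕ), by omega⟩ : ℕ) := by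
        intro t
        rw [wordOf_getElem]
      refine ⟨⟨i1, by omega⟩, ⟨i2, by omega⟩, ⟨i3, by omega⟩, ?_, ?_, ?_, ?_⟩
      · rw [Fin.lt_def]; exact h12
      · rw [Fin.lt_def]; exact h23
      · rw [Fin.lt_def]
        rw [ha, hget] at h1
        rw [hc, hget] at h1
        exact h1
      · rw [Fin.lt_def]
        rw [ha, hget] at h2
        rw [hb, hget] at h2
        exact h2
  · rintro ⟨i, j, k, hij, hjk, h1, h2⟩
    have hlen : (wordOf π).length = n := wordOf_length π
    refine ⟨(π i : ℕ), (π j : ℕ), (π k : ℕ), ?_, h1, h2⟩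
    have hs := List.map_getElem_sublist
      (l := wordOf π)
      (is := [⟨i, by omega⟩, ⟨j, by omega⟩, ⟨k, by omega⟩]) ?_
    · simpa [wordOf, Fin.eta] using hs
    · simp only [List.pairwise_cons, List.mem_cons]
      refine ⟨?_, ?_, ?_⟩
      · rintro y (rfl | rfl | h)
        · exact hij
        · exact hij.trans hjk
        · simp at h
      · rintro y (rfl | h)
        · exact hjk
        · simp at h
      · simp
end Transfer

section Final
attribute [local instance] Classical.propDecidable

lemma card_subtype_eq (n : ℕ) (P : Equiv.Perm (Fin n) → Prop) (G : List ℕ → Prop)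
    (h : ∀ π : Equiv.Perm (Fin n), P π ↔ G (wordOf π)) :
    Nat.card {π : Equiv.Perm (Fin n) // P π} = cnt G n := by
  rw [cnt, ← Nat.card_eq_finsetCard]
  apply Nat.card_congr
  refine Equiv.ofBijective (fun x => ⟨wordOf x.1, ?_⟩) ⟨?_, ?_⟩
  · rw [Finset.mem_filter]
    exact ⟨mem_perms.mpr (wordOf_perm x.1), (h x.1).mp x.2⟩
  · rintro ⟨π1, h1⟩ ⟨π2, h2⟩ heq
    simp only [Subtype.mk.injEq, wordOf, List.ofFn_inj] at heq
    have hpe : π1 = π2 := by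
      apply Equiv.ext
      intro i
      exact Fin.val_injective (congrFun heq i)
    simp [hpe]
  · rintro ⟨w, hw⟩
    rw [Finset.mem_filter] at hw
    obtain ⟨hwp, hG⟩ := hw
    rw [mem_perms] at hwp
    have hlen : w.length = n := by simpa using hwp.length_eq
    have hnd : w.Nodup := hwp.nodup_iff.mpr (List.nodup_range)
    have hbd : ∀ i (hi : i < w.length), w[i] < n := fun i hi => by
      have h1 : w[i] ∈ w := List.getElem_mem hi
      have := hwp.mem_iff.mp h1; simpa using this
    have hinj : Function.Injective
        (fun i : Fin n => (⟨w[(i : ℕ)]'(by omega), hbd _ _⟩ : Fin n)) := by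
      intro a b hab
      simp only [Fin.mk.injEq] at hab
      have hgi := List.nodup_iff_injective_get.mp hnd
      have h2 : w.get ⟨a, by omega⟩ = w.get ⟨b, by omega⟩ := by
        simpa [List.get_eq_getElem] using hab
      have h3 := hgi h2
      exact Fin.ext (by simpa using congrArg Fin.val h3)
    set e : Equiv.Perm (Fin n) :=
      Equiv.ofBijective _ (Finite.injective_iff_bijective.mp hinj) with he
    have hwe : wordOf e = w := by
      apply List.ext_getElem (by simp [wordOf, hlen])
      intro i h1 h2
      simp only [wordOf, List.getElem_ofFn]
      rfl
    exact ⟨⟨e, (h e).mpr (hwe ▸ hG)⟩, Subtype.ext hwe⟩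

end Final

/-- The mesh patterns `(12, {⟨1,0⟩,⟨1,1⟩,⟨1,2⟩,⟨2,0⟩,⟨2,1⟩})` and
`(21, {⟨0,1⟩,⟨1,0⟩,⟨1,1⟩,⟨1,2⟩,⟨2,1⟩})` are Wilf-equivalent under the
dominating pattern 231. -/
theorem wilf_equiv_12_21_under_231 (n : ℕ) :
    Nat.card {π : Equiv.Perm (Fin n) // Avoids231 π ∧
        AvoidsMesh (1 : Equiv.Perm (Fin 2))
          ({(1,0),(1,1),(1,2),(2,0),(2,1)} : Finset (ℕ × ℕ)) π} =
      Nat.card {π : Equiv.Perm (Fin n) // Avoids231 π ∧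
        AvoidsMesh (Equiv.swap 0 1 : Equiv.Perm (Fin 2))
          ({(0,1),(1,0),(1,1),(1,2),(2,1)} : Finset (ℕ × ℕ)) π} := by
  have e1 : ∀ π : Equiv.Perm (Fin n), Avoids231 π ↔ ¬ Occ231 (wordOf π) := fun π => by
    rw [occ231_iff, not_not]
  have h1 : Nat.card {π : Equiv.Perm (Fin n) // Avoids231 π ∧
      AvoidsMesh (1 : Equiv.Perm (Fin 2))
        ({(1,0),(1,1),(1,2),(2,0),(2,1)} : Finset (ℕ × ℕ)) π} = cnt GoodA n := by
    apply card_subtype_eq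
    intro π
    have eA := occA_iff_simpleA π
    have eM := mesh1_iff π
    have e1' := e1 π
    unfold AvoidsMesh GoodA
    rw [eM, ← eA, e1']
  have h2 : Nat.card {π : Equiv.Perm (Fin n) // Avoids231 π ∧
      AvoidsMesh (Equiv.swap 0 1 : Equiv.Perm (Fin 2))
        ({(0,1),(1,0),(1,1),(1,2),(2,1)} : Finset (ℕ × ℕ)) π} = cnt GoodB n := by
    apply card_subtype_eq
    intro π
    have eB := occB_iff_simpleB π
    have eM := mesh2_iff π
    have e1' := e1 π
    unfold AvoidsMesh GoodB
    rw [eM, ← eB, e1']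
  rw [h1, h2, main_cnt n]
end
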